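/- arXiv:0709.3715 — 7 statements merged into one kernel-verified Lean document; each statement's English description precedes it below -/
import Mathlib

section
/- Let X be a compact pospace whose partial order is lower open. Let FX denote the set of closed upper subsets of X, topologized by the topology generated by the sets {A ∈ FX | A ⊆ V} for V open in X together with the sets {B ∈ FX | B ∩ W ≠ ∅} for W open in X with W = ↓W. Let FUX denote the set of all closed subsets of X, topologized by the topology generated by the sets {A | A ⊆ V} for V open together with the sets {B | B ∩ W ≠ ∅} for W open. Then the inclusion function FX → FUX is continuous. -/
open Topology

/-- The lower closure of a subset of a preordered set. -/
def lowerCl {X : Type*} [Preorder X] (W : Set X) : Set X := {x : X | ∃ w ∈ W, x ≤ w}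

/-- The hyperspace `FX` of closed upper subsets of a compact pospace `X`, with the
topology generated by `{A | A ⊆ V}` for `V` open and `{B | B ∩ W ≠ ∅}` for `W` open
and a lower set. -/
def hyperUpperTop (X : Type*) [TopologicalSpace X] [PartialOrder X] :
    TopologicalSpace {A : Set X // IsClosed A ∧ ∀ a ∈ A, ∀ x, a ≤ x → x ∈ A} :=
  TopologicalSpace.generateFrom
    ({S | ∃ V : Set X, IsOpen V ∧
        S = {A : {A : Set X // IsClosed A ∧ ∀ a ∈ A, ∀ x, a ≤ x → x ∈ A} | A.1 ⊆ V}} ∪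
     {S | ∃ W : Set X, IsOpen W ∧ W = lowerCl W ∧
        S = {B : {A : Set X // IsClosed A ∧ ∀ a ∈ A, ∀ x, a ≤ x → x ∈ A} |
              (B.1 ∩ W).Nonempty}})

/-- The hyperspace `FUX` of all closed subsets of `X`, with the topology generated by
`{A | A ⊆ V}` and `{B | B ∩ W ≠ ∅}` for `V`, `W` open. -/
def hyperTop (X : Type*) [TopologicalSpace X] :
    TopologicalSpace {A : Set X // IsClosed A} :=
  TopologicalSpace.generateFrom
    ({S | ∃ V : Set X, IsOpen V ∧ S = {A : {A : Set X // IsClosed A} | A.1 ⊆ V}} ∪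
     {S | ∃ W : Set X, IsOpen W ∧ S = {B : {A : Set X // IsClosed A} | (B.1 ∩ W).Nonempty}})

/-- If `X` is a compact pospace with lower open partial order, then the inclusion
`FX → FUX` is continuous. -/
theorem stmt_5 {X : Type*} [TopologicalSpace X] [PartialOrder X] [CompactSpace X]
    (hpos : IsClosed {p : X × X | p.1 ≤ p.2})
    (hlo : ∀ V : Set X, IsOpen V → IsOpen (lowerCl V)) :
    Continuous[hyperUpperTop X, hyperTop X]
      (fun A : {A : Set X // IsClosed A ∧ ∀ a ∈ A, ∀ x, a ≤ x → x ∈ A} =>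
        (⟨A.1, A.2.1⟩ : {A : Set X // IsClosed A})) := by
  rw [hyperTop, continuous_generateFrom_iff]
  rintro S (⟨V, hV, rfl⟩ | ⟨W, hW, rfl⟩)
  · exact TopologicalSpace.GenerateOpen.basic _ (Or.inl ⟨V, hV, rfl⟩)
  · have key : (fun A : {A : Set X // IsClosed A ∧ ∀ a ∈ A, ∀ x, a ≤ x → x ∈ A} =>
        (⟨A.1, A.2.1⟩ : {A : Set X // IsClosed A})) ⁻¹'
        {B : {A : Set X // IsClosed A} | (B.1 ∩ W).Nonempty}
        = {B : {A : Set X // IsClosed A ∧ ∀ a ∈ A, ∀ x, a ≤ x → x ∈ A} |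
            (B.1 ∩ lowerCl W).Nonempty} := by
      ext B
      simp only [Set.mem_preimage, Set.mem_setOf_eq]
      constructor
      · rintro ⟨x, hxB, hxW⟩
        exact ⟨x, hxB, ⟨x, hxW, le_refl x⟩⟩
      · rintro ⟨x, hxB, ⟨w, hwW, hxw⟩⟩
        exact ⟨w, B.2.2 x hxB w hxw, hwW⟩
    rw [key]
    refine TopologicalSpace.GenerateOpen.basic _ (Or.inr ⟨lowerCl W, hlo W hW, ?_, rfl⟩)
    ext x
    constructor
    · rintro ⟨w, hwW, hxw⟩
      exact ⟨x, ⟨w, hwW, hxw⟩, le_refl x⟩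
    · rintro ⟨y, ⟨w, hwW, hyw⟩, hxy⟩
      exact ⟨w, hwW, le_trans hxy hyw⟩
end

section
/- Let X be a compact pospace whose partial order is lower open, and let Y be a complete lattice carrying a Lawson-lattice topology. For a continuous function f : X → Y, define R(f) : X → Y by R(f)(x) = ⨅ { f(x') | x ≤ x' }. Then: (1) for every continuous f : X → Y, the function R(f) is continuous and monotone; and (2) if f : X → Y is continuous and monotone, then R(f) = f. Hence R is a retraction of the inclusion of monotone continuous maps X → Y into continuous maps X → Y. -/
open Filter Set Topology

section Aux

variable {Y : Type*} [CompleteLattice Y] [TopologicalSpace Y] [CompactSpace Y] [T2Space Y]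

lemma aux_le_closed (hinf : Continuous fun p : Y × Y => p.1 ⊓ p.2) :
    IsClosed {p : Y × Y | p.1 ≤ p.2} := by
  have h : {p : Y × Y | p.1 ≤ p.2}
      = (fun p : Y × Y => (p.1 ⊓ p.2, p.1)) ⁻¹' {q : Y × Y | q.1 = q.2} := by
    ext p; simp [inf_eq_left]
  rw [h]
  exact (isClosed_eq continuous_fst continuous_snd).preimage (hinf.prodMk continuous_fst)

lemma aux_lower_closed {Z : Type*} [TopologicalSpace Z] [Preorder Z] [CompactSpace Z]
    (hcl : IsClosed {p : Z × Z | p.1 ≤ p.2}) {C : Set Z} (hC : IsClosed C) :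
    IsClosed {x : Z | ∃ v ∈ C, x ≤ v} := by
  have h : {x : Z | ∃ v ∈ C, x ≤ v}
      = Prod.snd '' ({p : Z × Z | p.2 ≤ p.1} ∩ C ×ˢ Set.univ) := by
    ext x
    constructor
    · rintro ⟨v, hv, hxv⟩; exact ⟨(v, x), ⟨hxv, hv, trivial⟩, rfl⟩
    · rintro ⟨⟨v, x'⟩, ⟨hle, hv, -⟩, rfl⟩; exact ⟨v, hv, hle⟩
  rw [h]
  apply isClosedMap_snd_of_compactSpace
  exact (hcl.preimage (continuous_snd.prodMk continuous_fst)).inter (hC.prod isClosed_univ)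

lemma aux_sInf_mem_closure (hinf : Continuous fun p : Y × Y => p.1 ⊓ p.2)
    {K : Set Y} (hK : K.Nonempty) :
    sInf K ∈ closure {t : Y | ∃ (F : Finset Y) (h : F.Nonempty), ↑F ⊆ K ∧ F.inf' h id = t} := by
  classical
  have hle := aux_le_closed hinf
  obtain ⟨k₀, hk₀⟩ := hK
  set T : Finset Y → Set Y := fun F =>
    closure {t : Y | ∃ (F' : Finset Y) (h : F'.Nonempty), ↑F' ⊆ K ∧ F ⊆ F' ∧ F'.inf' h id = t}
    with hT
  have hmono : ∀ F₁ F₂ : Finset Y, F₁ ⊆ F₂ → T F₂ ⊆ T F₁ := by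
    intro F₁ F₂ h12
    apply closure_mono
    rintro t ⟨F', h', hF'K, hsub, rfl⟩
    exact ⟨F', h', hF'K, h12.trans hsub, rfl⟩
  have hne : ∀ F : {F : Finset Y // ↑F ⊆ K}, (T F.1).Nonempty := by
    rintro ⟨F, hF⟩
    refine ⟨(insert k₀ F).inf' (Finset.insert_nonempty _ _) id, subset_closure ?_⟩
    exact ⟨insert k₀ F, Finset.insert_nonempty _ _, by
      intro t ht
      rcases Finset.mem_insert.mp ht with rfl | h
      · exact hk₀
      · exact hF h, Finset.subset_insert _ _, rfl⟩
  have hkey : (⋂ F : {F : Finset Y // ↑F ⊆ K}, T F.1).Nonempty := by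
    haveI : Nonempty {F : Finset Y // ↑F ⊆ K} := ⟨⟨∅, by simp⟩⟩
    apply IsCompact.nonempty_iInter_of_directed_nonempty_isCompact_isClosed
    · rintro ⟨F₁, h₁⟩ ⟨F₂, h₂⟩
      refine ⟨⟨F₁ ∪ F₂, ?_⟩, hmono _ _ Finset.subset_union_left,
        hmono _ _ Finset.subset_union_right⟩
      intro t ht
      rcases Finset.mem_union.mp ht with h | h
      · exact h₁ h
      · exact h₂ h
    · exact hne
    · intro F; exact isClosed_closure.isCompact
    · intro F; exact isClosed_closure
  obtain ⟨y, hy⟩ := hkey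
  have hy' : ∀ F : {F : Finset Y // ↑F ⊆ K}, y ∈ T F.1 := by
    intro F; exact Set.mem_iInter.mp hy F
  -- y is a lower bound of K
  have hlb : ∀ k ∈ K, y ≤ k := by
    intro k hk
    have h1 : y ∈ T {k} := hy' ⟨{k}, by simpa using hk⟩
    have h2 : IsClosed {z : Y | z ≤ k} :=
      hle.preimage (continuous_id.prodMk continuous_const)
    refine closure_minimal ?_ h2 h1
    rintro t ⟨F', h', hF'K, hsub, rfl⟩
    exact Finset.inf'_le id (hsub (Finset.mem_singleton_self k))
  -- sInf K ≤ y
  have hub : sInf K ≤ y := by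
    have h1 : y ∈ T ∅ := hy' ⟨∅, by simp⟩
    have h2 : IsClosed {z : Y | sInf K ≤ z} :=
      hle.preimage (continuous_const.prodMk continuous_id)
    refine closure_minimal ?_ h2 h1
    rintro t ⟨F', h', hF'K, -, rfl⟩
    exact Finset.le_inf' h' id fun b hb => sInf_le (hF'K hb)
  have hyeq : y = sInf K := le_antisymm (le_sInf hlb) hub
  have h1 : y ∈ T ∅ := hy' ⟨∅, by simp⟩
  rw [← hyeq]
  refine closure_mono ?_ h1
  rintro t ⟨F', h', hF'K, -, rfl⟩
  exact ⟨F', h', hF'K, rfl⟩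

lemma aux_closed_subsemilattice (hinf : Continuous fun p : Y × Y => p.1 ⊓ p.2)
    (hbasis : ∀ y : Y, (nhds y).HasBasis
      (fun s : Set Y => s ∈ nhds y ∧ ∀ a ∈ s, ∀ b ∈ s, a ⊓ b ∈ s) id)
    (y : Y) {U : Set Y} (hU : U ∈ 𝓝 y) :
    ∃ V ∈ 𝓝 y, IsClosed V ∧ V ⊆ U ∧ ∀ a ∈ V, ∀ b ∈ V, a ⊓ b ∈ V := by
  obtain ⟨C, hC, hCc, hCU⟩ := exists_mem_nhds_isClosed_subset hU
  obtain ⟨s, ⟨hs, hsl⟩, hsC⟩ := (hbasis y).mem_iff.mp (interior_mem_nhds.mpr hC)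
  refine ⟨closure s, mem_of_superset hs subset_closure, isClosed_closure, ?_, ?_⟩
  · exact (closure_minimal ((hsC : s ⊆ interior C).trans interior_subset) hCc).trans hCU
  · intro a ha b hb
    exact map_mem_closure₂ hinf ha hb hsl

lemma aux_le_of_closed (hinf : Continuous fun p : Y × Y => p.1 ⊓ p.2) {z w : Y}
    (h : ∀ C : Set Y, IsClosed C → C ∈ 𝓝 w → ∃ q ∈ C, z ≤ q) : z ≤ w := by
  by_contra hzw
  have hS : IsClosed {q : Y | z ≤ q} :=
    (aux_le_closed hinf).preimage (continuous_const.prodMk continuous_id)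
  have hmem : {q : Y | z ≤ q}ᶜ ∈ 𝓝 w := hS.isOpen_compl.mem_nhds hzw
  obtain ⟨C, hC, hCc, hsub⟩ := exists_mem_nhds_isClosed_subset hmem
  obtain ⟨q, hq, hzq⟩ := h C hCc hC
  exact hsub hq hzq

lemma aux_mem_of_ultra {𝒱 : Ultrafilter Y} {z : Y} (hz : ↑𝒱 ≤ 𝓝 z) {S : Set Y}
    (hS : IsClosed S) (hmem : S ∈ 𝒱) : z ∈ S := by
  have h1 : (𝓝 z ⊓ 𝓟 S).NeBot := neBot_of_le (le_inf hz (le_principal_iff.mpr hmem))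
  have h2 : ClusterPt z (𝓟 S) := h1
  exact hS.closure_eq ▸ mem_closure_iff_clusterPt.mpr h2

lemma aux_inf'_mem {W : Type*} [SemilatticeInf W] {V : Set W}
    (hVl : ∀ a ∈ V, ∀ b ∈ V, a ⊓ b ∈ V) {A : Set W} (y₀ : W)
    (hA : ∀ s ∈ A, s ⊓ y₀ ∈ V) :
    ∀ (F : Finset W) (h : F.Nonempty), ↑F ⊆ A → F.inf' h id ⊓ y₀ ∈ V := by
  intro F h
  induction h using Finset.Nonempty.cons_induction with
  | singleton a =>
    intro hsub
    simpa using hA a (hsub (Finset.mem_singleton_self a))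
  | cons a s ha hs ih =>
    intro hsub
    have h1 : a ⊓ y₀ ∈ V := hA a (hsub (Finset.mem_cons_self a s))
    have h2 := ih fun t ht => hsub (Finset.mem_cons.mpr (Or.inr ht))
    rw [Finset.inf'_cons hs]
    have heq : (id a ⊓ s.inf' hs id) ⊓ y₀ = (a ⊓ y₀) ⊓ (s.inf' hs id ⊓ y₀) := by
      rw [inf_inf_inf_comm, inf_idem]; rfl
    rw [heq]
    exact hVl _ h1 _ h2

end Aux

/-- Let `X` be a compact pospace with lower open partial order, and let `Y` be a
complete lattice carrying a Lawson-lattice topology (compact Hausdorff, binary inf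
jointly continuous, and every point admits a neighborhood basis of sub-inf-semilattices).
For `f : X → Y` define `R f x = ⨅ {f x' | x ≤ x'}`.  Then `R f` is continuous and
monotone for every continuous `f`, and `R f = f` when `f` is moreover monotone. -/
theorem stmt_6 {X Y : Type*} [TopologicalSpace X] [PartialOrder X] [CompactSpace X]
    (hpos : IsClosed {p : X × X | p.1 ≤ p.2})
    (hlo : ∀ V : Set X, IsOpen V → IsOpen {x : X | ∃ v ∈ V, x ≤ v})
    [CompleteLattice Y] [TopologicalSpace Y] [CompactSpace Y] [T2Space Y]
    (hinf : Continuous fun p : Y × Y => p.1 ⊓ p.2)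
    (hbasis : ∀ y : Y, (nhds y).HasBasis
      (fun s : Set Y => s ∈ nhds y ∧ ∀ a ∈ s, ∀ b ∈ s, a ⊓ b ∈ s) id) :
    (∀ f : X → Y, Continuous f →
        Continuous (fun x : X => sInf (f '' {x' : X | x ≤ x'})) ∧
        Monotone (fun x : X => sInf (f '' {x' : X | x ≤ x'}))) ∧
    (∀ f : X → Y, Continuous f → Monotone f →
        (fun x : X => sInf (f '' {x' : X | x ≤ x'})) = f) := by
  constructor
  · intro f hf
    set g : X → Y := fun x => sInf (f '' {x' : X | x ≤ x'}) with hg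
    have hmono : Monotone g := by
      intro a b hab
      exact sInf_le_sInf (Set.image_mono fun t ht => hab.trans ht)
    refine ⟨?_, hmono⟩
    rw [continuous_iff_continuousAt]
    intro x₀
    have hlow : ∀ x', x₀ ≤ x' → g x₀ ≤ f x' := fun x' h => sInf_le ⟨x', h, rfl⟩
    set y₀ := g x₀ with hy₀
    -- Claim A : g x ⊓ y₀ → y₀
    have claimA : Tendsto (fun x => g x ⊓ y₀) (𝓝 x₀) (𝓝 y₀) := by
      rw [Filter.tendsto_def]
      intro U hU
      obtain ⟨V, hV, hVc, hVU, hVl⟩ := aux_closed_subsemilattice hinf hbasis y₀ hU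
      set D : Set Y := (fun y => y ⊓ y₀) ⁻¹' interior V with hD
      have hDopen : IsOpen D :=
        isOpen_interior.preimage (hinf.comp (continuous_id.prodMk continuous_const))
      set O : Set X := f ⁻¹' D with hO
      have hOopen : IsOpen O := hDopen.preimage hf
      have hsub : {x' : X | x₀ ≤ x'} ⊆ O := by
        intro x' hx'
        show f x' ⊓ y₀ ∈ interior V
        rw [inf_eq_right.mpr (hlow x' hx')]
        exact mem_interior_iff_mem_nhds.mpr hV
      have hWclosed : IsClosed {x : X | ∃ v ∈ Oᶜ, x ≤ v} :=
        aux_lower_closed hpos hOopen.isClosed_compl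
      have hW : {x : X | ∃ v ∈ Oᶜ, x ≤ v}ᶜ ∈ 𝓝 x₀ := by
        apply hWclosed.isOpen_compl.mem_nhds
        rintro ⟨v, hv, hle⟩
        exact hv (hsub hle)
      filter_upwards [hW] with x hx
      have hxO : ∀ x', x ≤ x' → f x' ∈ D := by
        intro x' h
        by_contra hc
        exact hx ⟨x', hc, h⟩
      have hKne : (f '' {x' : X | x ≤ x'}).Nonempty := ⟨f x, x, le_rfl, rfl⟩
      have hmem := aux_sInf_mem_closure hinf hKne
      have hZ : IsClosed ((fun t => t ⊓ y₀) ⁻¹' V) :=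
        hVc.preimage (hinf.comp (continuous_id.prodMk continuous_const))
      have hsubZ : {t : Y | ∃ (F : Finset Y) (h : F.Nonempty),
          ↑F ⊆ f '' {x' : X | x ≤ x'} ∧ F.inf' h id = t} ⊆ (fun t => t ⊓ y₀) ⁻¹' V := by
        rintro t ⟨F, hFne, hFK, rfl⟩
        refine aux_inf'_mem hVl y₀ ?_ F hFne hFK
        rintro s ⟨x', hx', rfl⟩
        exact interior_subset (hxO x' hx')
      have : g x ∈ (fun t => t ⊓ y₀) ⁻¹' V := closure_minimal hsubZ hZ hmem
      exact hVU this
    rw [ContinuousAt, tendsto_iff_ultrafilter]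
    intro 𝒰 h𝒰
    obtain ⟨z, -, hz⟩ := isCompact_univ.ultrafilter_le_nhds (𝒰.map g)
      (le_principal_iff.mpr univ_mem)
    have hz_le : z ≤ y₀ := by
      apply le_sInf
      rintro b ⟨x', hx', rfl⟩
      apply aux_le_of_closed hinf
      intro C hCc hCn
      have hL := hlo _ (isOpen_interior.preimage hf : IsOpen (f ⁻¹' interior C))
      have hx₀L : x₀ ∈ {x : X | ∃ v ∈ f ⁻¹' interior C, x ≤ v} :=
        ⟨x', mem_interior_iff_mem_nhds.mpr hCn, hx'⟩
      have hev : {x : X | g x ∈ {y : Y | ∃ q ∈ C, y ≤ q}} ∈ 𝓝 x₀ := by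
        filter_upwards [hL.mem_nhds hx₀L] with x hx
        obtain ⟨v, hv, hxv⟩ := hx
        exact ⟨f v, interior_subset hv, sInf_le ⟨v, hxv, rfl⟩⟩
      have hclosed : IsClosed {y : Y | ∃ q ∈ C, y ≤ q} :=
        aux_lower_closed (aux_le_closed hinf) hCc
      have hmem𝒰 : {y : Y | ∃ q ∈ C, y ≤ q} ∈ 𝒰.map g := h𝒰 hev
      exact aux_mem_of_ultra hz hclosed hmem𝒰
    have hy_le : y₀ ≤ z := by
      have h1 : Tendsto (fun x => g x ⊓ y₀) (𝒰 : Filter X) (𝓝 y₀) := claimA.mono_left h𝒰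
      have h2 : Tendsto g (𝒰 : Filter X) (𝓝 z) := hz
      have h3 : Tendsto (fun x => g x ⊓ y₀) (𝒰 : Filter X) (𝓝 (z ⊓ y₀)) :=
        (hinf.tendsto (z, y₀)).comp (h2.prodMk_nhds tendsto_const_nhds)
      exact inf_eq_right.mp (tendsto_nhds_unique h3 h1)
    have hzy : z = y₀ := le_antisymm hz_le hy_le
    have hz' : Tendsto g (𝒰 : Filter X) (𝓝 z) := hz
    have hz'' : Tendsto g (𝒰 : Filter X) (𝓝 y₀) := hzy ▸ hz'
    exact hz''
  · intro f hf hmono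
    funext x
    apply le_antisymm
    · exact sInf_le ⟨x, le_rfl, rfl⟩
    · refine le_sInf ?_
      rintro b ⟨x', hx', rfl⟩
      exact hmono hx'
end

section
/- Let X be a compact pospace whose partial order is lower open, and let Y be a complete lattice carrying a Lawson-lattice topology. Suppose f, g : X → Y are continuous functions that are homotopic, i.e. there is a continuous H : X × [0,1] → Y with H(·,0) = f and H(·,1) = g. Define R(f)(x) = ⨅ { f(x') | x ≤ x' } and R(g)(x) = ⨅ { g(x') | x ≤ x' }. Then R(f) and R(g) are homotopic through monotone maps: there exists a continuous K : X × [0,1] → Y with K(·,0) = R(f), K(·,1) = R(g), and K(·,t) : X → Y monotone for every t ∈ [0,1]. -/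
open unitInterval

section Aux

lemma aux_clusterPt_mem {Z : Type*} [TopologicalSpace Z] {F : Filter Z} {z : Z} {C : Set Z}
    (hz : ClusterPt z F) (hC : C ∈ F) (hCc : IsClosed C) : z ∈ C := by
  have h1 : ClusterPt z (Filter.principal C) := hz.mono (Filter.le_principal_iff.2 hC)
  have h2 : z ∈ closure C := mem_closure_iff_clusterPt.2 h1
  rwa [hCc.closure_eq] at h2

lemma aux_proj_closed {Z : Type*} [TopologicalSpace Z] [CompactSpace Z] {S : Set (Z × Z)}
    (hS : IsClosed S) : IsClosed {a : Z | ∃ b : Z, (a, b) ∈ S} := by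
  have h := isClosedMap_fst_of_compactSpace (X := Z) (Y := Z) S hS
  have : Prod.fst '' S = {a : Z | ∃ b : Z, (a, b) ∈ S} := by
    ext a
    constructor
    · rintro ⟨⟨a', b⟩, hb, rfl⟩; exact ⟨b, hb⟩
    · rintro ⟨b, hb⟩; exact ⟨(a, b), hb, rfl⟩
  rwa [this] at h

lemma aux_tendsto_of_clusterPt {Z : Type*} [TopologicalSpace Z] [CompactSpace Z]
    (G : Filter Z) [G.NeBot] (y₀ : Z)
    (h : ∀ z, ClusterPt z G → z = y₀) : G ≤ nhds y₀ := by
  by_contra hle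
  obtain ⟨U, hU, hUG⟩ : ∃ U ∈ nhds y₀, U ∉ G := by
    rw [Filter.le_def] at hle; push_neg at hle; exact hle
  have hU' : interior U ∈ nhds y₀ := interior_mem_nhds.2 hU
  have hU'G : interior U ∉ G := fun h' => hUG (Filter.mem_of_superset h' interior_subset)
  haveI : (G ⊓ Filter.principal (interior U)ᶜ).NeBot := by
    refine ⟨fun hbot => hU'G ?_⟩
    rwa [Filter.inf_principal_eq_bot, compl_compl] at hbot
  obtain ⟨z, hz⟩ := exists_clusterPt_of_compactSpace (G ⊓ Filter.principal (interior U)ᶜ)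
  have hzy : z = y₀ := h z (hz.mono inf_le_left)
  have hmem : z ∈ (interior U)ᶜ :=
    aux_clusterPt_mem hz (Filter.mem_inf_of_right (Filter.mem_principal_self _))
      (isClosed_compl_iff.2 isOpen_interior)
  rw [hzy] at hmem
  exact hmem (mem_of_mem_nhds hU')

lemma aux_ord_closed {Y : Type*} [TopologicalSpace Y] [T2Space Y] [Lattice Y]
    (hinf : Continuous fun p : Y × Y => p.1 ⊓ p.2) :
    IsClosed {p : Y × Y | p.1 ≤ p.2} := by
  have hc : Continuous fun p : Y × Y => (p.1 ⊓ p.2, p.1) := hinf.prodMk continuous_fst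
  have : {p : Y × Y | p.1 ≤ p.2}
      = (fun p : Y × Y => (p.1 ⊓ p.2, p.1)) ⁻¹' {q : Y × Y | q.1 = q.2} := by
    ext p
    simp only [Set.mem_setOf_eq, Set.mem_preimage]
    exact inf_eq_left.symm
  rw [this]
  exact IsClosed.preimage hc isClosed_diagonal

lemma aux_sInf_mem {Y : Type*} [CompleteLattice Y] [TopologicalSpace Y] [CompactSpace Y]
    [T2Space Y] (hinf : Continuous fun p : Y × Y => p.1 ⊓ p.2)
    {s : Set Y} (hs : s.Nonempty) {C : Set Y} (hC : IsClosed C)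
    (hD : ∀ F : Finset s, (h : F.Nonempty) → F.inf' h (fun a => (a : Y)) ∈ C) :
    sInf s ∈ C := by
  classical
  obtain ⟨a₀, ha₀⟩ := hs
  set v : Finset s → Y :=
    fun F => (insert (⟨a₀, ha₀⟩ : s) F).inf' (Finset.insert_nonempty _ _) (fun a => (a : Y))
    with hv
  have hvC : ∀ F, v F ∈ C := fun F => hD _ _
  obtain ⟨z, hz⟩ := exists_clusterPt_of_compactSpace (Filter.map v Filter.atTop)
  have hcl := aux_ord_closed hinf
  have hIic : ∀ c : Y, IsClosed {u : Y | u ≤ c} := fun c =>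
    hcl.preimage (continuous_id.prodMk continuous_const)
  have hIci : ∀ c : Y, IsClosed {u : Y | c ≤ u} := fun c =>
    hcl.preimage (continuous_const.prodMk continuous_id)
  have h1 : ∀ c ∈ s, z ≤ c := by
    intro c hc
    have hev : {u : Y | u ≤ c} ∈ Filter.map v Filter.atTop := by
      rw [Filter.mem_map]
      have : ∀ F : Finset s, {(⟨c, hc⟩ : s)} ≤ F → v F ≤ c := by
        intro F hF
        have hcF : (⟨c, hc⟩ : s) ∈ insert (⟨a₀, ha₀⟩ : s) F :=
          Finset.mem_insert_of_mem (hF (Finset.mem_singleton_self _))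
        exact Finset.inf'_le _ hcF
      exact Filter.mem_of_superset (Filter.eventually_atTop.2 ⟨_, this⟩) (fun F hF => hF)
    have hmem' := aux_clusterPt_mem hz hev (hIic c)
    exact hmem'
  have h2 : sInf s ≤ z := by
    have hev : {u : Y | sInf s ≤ u} ∈ Filter.map v Filter.atTop := by
      rw [Filter.mem_map]
      exact Filter.univ_mem' fun F => (Finset.le_inf'_iff _ _).2 fun b _ => sInf_le b.2
    have hmem' := aux_clusterPt_mem hz hev (hIci _)
    exact hmem'
  have hzC : z ∈ C := aux_clusterPt_mem hz (Filter.mem_map.2 (Filter.univ_mem' hvC)) hC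
  have hzs : z = sInf s := le_antisymm (le_sInf h1) h2
  rwa [hzs] at hzC

end Aux

/-- Let `X` be a compact pospace with lower open partial order and `Y` a complete
lattice carrying a Lawson-lattice topology.  If `f, g : X → Y` are continuous and
homotopic, then `R f` and `R g` (where `R f x = ⨅ {f x' | x ≤ x'}`) are homotopic
through monotone maps. -/
theorem stmt_7 {X Y : Type*} [TopologicalSpace X] [PartialOrder X] [CompactSpace X]
    (hpos : IsClosed {p : X × X | p.1 ≤ p.2})
    (hlo : ∀ V : Set X, IsOpen V → IsOpen {x : X | ∃ v ∈ V, x ≤ v})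
    [CompleteLattice Y] [TopologicalSpace Y] [CompactSpace Y] [T2Space Y]
    (hinf : Continuous fun p : Y × Y => p.1 ⊓ p.2)
    (hbasis : ∀ y : Y, (nhds y).HasBasis
      (fun s : Set Y => s ∈ nhds y ∧ ∀ a ∈ s, ∀ b ∈ s, a ⊓ b ∈ s) id)
    (f g : X → Y) (hf : Continuous f) (hg : Continuous g)
    (H : X × I → Y) (hH : Continuous H)
    (hH0 : ∀ x, H (x, 0) = f x) (hH1 : ∀ x, H (x, 1) = g x) :
    ∃ K : X × I → Y, Continuous K ∧
      (∀ x, K (x, 0) = sInf (f '' {x' : X | x ≤ x'})) ∧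
      (∀ x, K (x, 1) = sInf (g '' {x' : X | x ≤ x'})) ∧
      (∀ t : I, Monotone fun x : X => K (x, t)) := by
  classical
  have hclY : IsClosed {p : Y × Y | p.1 ≤ p.2} := aux_ord_closed hinf
  set K : X × I → Y := fun p => sInf ((fun x' => H (x', p.2)) '' {x' : X | p.1 ≤ x'})
    with hKdef
  have hK0 : ∀ x, K (x, 0) = sInf (f '' {x' : X | x ≤ x'}) := by
    intro x
    show sInf ((fun x' => H (x', 0)) '' {x' : X | x ≤ x'}) = _
    congr 1
    exact Set.image_congr fun x' _ => hH0 x'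
  have hK1 : ∀ x, K (x, 1) = sInf (g '' {x' : X | x ≤ x'}) := by
    intro x
    show sInf ((fun x' => H (x', 1)) '' {x' : X | x ≤ x'}) = _
    congr 1
    exact Set.image_congr fun x' _ => hH1 x'
  have hmono : ∀ t : I, Monotone fun x : X => K (x, t) := by
    intro t x x' hxx'
    apply sInf_le_sInf
    apply Set.image_mono
    intro a ha
    exact le_trans hxx' ha
  refine ⟨K, ?_, hK0, hK1, hmono⟩
  rw [continuous_iff_continuousAt]
  rintro ⟨x₀, t₀⟩
  set y₀ : Y := K (x₀, t₀) with hy₀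
  have hy₀le : ∀ x', x₀ ≤ x' → y₀ ≤ H (x', t₀) := by
    intro x' hx'
    exact sInf_le ⟨x', hx', rfl⟩
  haveI hGne : (Filter.map K (nhds (x₀, t₀))).NeBot := Filter.map_neBot
  apply aux_tendsto_of_clusterPt _ y₀
  intro z hz
  -- Part A : z ≤ H (x', t₀) for all x' ≥ x₀
  have hA : ∀ x', x₀ ≤ x' → z ≤ H (x', t₀) := by
    intro x' hx'
    by_contra hzle
    have hIci : IsClosed {u : Y | z ≤ u} :=
      hclY.preimage (continuous_const.prodMk continuous_id)
    have hopen : IsOpen {u : Y | z ≤ u}ᶜ := hIci.isOpen_compl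
    have hmem : H (x', t₀) ∈ {u : Y | z ≤ u}ᶜ := hzle
    obtain ⟨A, ⟨hAn, hAc⟩, hAsub⟩ := (closed_nhds_basis (H (x', t₀))).mem_iff.1
      (hopen.mem_nhds hmem)
    have hpre : H ⁻¹' A ∈ nhds (x', t₀) := hH.continuousAt.preimage_mem_nhds hAn
    obtain ⟨V, T, hVo, hx'V, hTo, ht₀T, hVT⟩ := mem_nhds_prod_iff'.1 hpre
    have hdown : IsOpen {x : X | ∃ v ∈ V, x ≤ v} := hlo V hVo
    have hN : ({x : X | ∃ v ∈ V, x ≤ v} ×ˢ T) ∈ nhds (x₀, t₀) := by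
      rw [nhds_prod_eq]
      exact Filter.prod_mem_prod (hdown.mem_nhds ⟨x', hx'V, hx'⟩) (hTo.mem_nhds ht₀T)
    have hev : {u : Y | ∃ a, a ∈ A ∧ u ≤ a} ∈ Filter.map K (nhds (x₀, t₀)) := by
      rw [Filter.mem_map]
      refine Filter.mem_of_superset hN ?_
      rintro ⟨x, t⟩ ⟨⟨v, hvV, hxv⟩, htT⟩
      exact ⟨H (v, t), hVT ⟨hvV, htT⟩, sInf_le ⟨v, hxv, rfl⟩⟩
    have hDA : IsClosed {u : Y | ∃ a, a ∈ A ∧ u ≤ a} := by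
      have hS : IsClosed {p : Y × Y | p.1 ≤ p.2 ∧ p.2 ∈ A} :=
        hclY.inter (hAc.preimage continuous_snd)
      have h' := aux_proj_closed hS
      have hseteq : {a : Y | ∃ b : Y, (a, b) ∈ {p : Y × Y | p.1 ≤ p.2 ∧ p.2 ∈ A}}
          = {u : Y | ∃ a, a ∈ A ∧ u ≤ a} := by
        ext u
        constructor
        · rintro ⟨b, hle, hb⟩; exact ⟨b, hb, hle⟩
        · rintro ⟨b, hb, hle⟩; exact ⟨b, hle, hb⟩
      rwa [hseteq] at h'
    obtain ⟨a, haA, hza⟩ := aux_clusterPt_mem hz hev hDA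
    exact hAsub haA hza
  have hzy : z ≤ y₀ := by
    rw [hy₀]
    refine le_sInf ?_
    rintro b ⟨x', hx', rfl⟩
    exact hA x' hx'
  -- Part B : y₀ ≤ z
  have hB : ∀ N ∈ nhds y₀, z ⊓ y₀ ∈ N := by
    intro N hNn
    obtain ⟨M, ⟨hMn, hMc⟩, hMN⟩ := (closed_nhds_basis y₀).mem_iff.1 hNn
    obtain ⟨W, ⟨hWn, hWinf⟩, hWM⟩ := (hbasis y₀).mem_iff.1 hMn
    set Ψ : X × I → Y := fun q => H q ⊓ y₀ with hΨdef
    have hΨc : Continuous Ψ := hinf.comp (hH.prodMk continuous_const)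
    have key : ∀ i : {x' : X // x₀ ≤ x'}, ∃ V : Set X, ∃ T : Set I,
        IsOpen V ∧ (i : X) ∈ V ∧ IsOpen T ∧ t₀ ∈ T ∧ V ×ˢ T ⊆ Ψ ⁻¹' interior W := by
      intro i
      have hΨmem : Ψ (i.1, t₀) ∈ interior W := by
        have heq : Ψ (i.1, t₀) = y₀ := inf_eq_right.2 (hy₀le i.1 i.2)
        rw [heq]
        exact mem_interior_iff_mem_nhds.2 hWn
      have hpre : Ψ ⁻¹' interior W ∈ nhds (i.1, t₀) :=
        hΨc.continuousAt.preimage_mem_nhds (isOpen_interior.mem_nhds hΨmem)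
      obtain ⟨V, T, h1, h2, h3, h4, h5⟩ := mem_nhds_prod_iff'.1 hpre
      exact ⟨V, T, h1, h2, h3, h4, h5⟩
    choose V T hVo hiV hTo ht₀T hVT using key
    have hupcl : IsClosed {x' : X | x₀ ≤ x'} := by
      have h' := hpos.preimage
        ((continuous_const : Continuous fun _ : X => x₀).prodMk continuous_id)
      exact h'
    have hupc : IsCompact {x' : X | x₀ ≤ x'} := hupcl.isCompact
    obtain ⟨Fc, hFc⟩ := hupc.elim_finite_subcover V hVo
      (fun x' hx' => Set.mem_iUnion.2 ⟨⟨x', hx'⟩, hiV _⟩)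
    set Vu : Set X := ⋃ i ∈ Fc, V i with hVu
    have hVuo : IsOpen Vu := isOpen_biUnion fun i _ => hVo i
    set Tt : Set I := ⋂ i ∈ Fc, T i with hTt
    have hTtn : Tt ∈ nhds t₀ :=
      (Filter.biInter_mem Fc.finite_toSet).2 fun i _ => (hTo i).mem_nhds (ht₀T i)
    have hSc : IsClosed {p : X × X | p.1 ≤ p.2 ∧ p.2 ∈ Vuᶜ} :=
      hpos.inter ((hVuo.isClosed_compl).preimage continuous_snd)
    have hOc : IsClosed {x : X | ∃ b : X, (x, b) ∈ {p : X × X | p.1 ≤ p.2 ∧ p.2 ∈ Vuᶜ}} :=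
      aux_proj_closed hSc
    set O : Set X := {x : X | ∃ b : X, (x, b) ∈ {p : X × X | p.1 ≤ p.2 ∧ p.2 ∈ Vuᶜ}}ᶜ
      with hO
    have hOo : IsOpen O := hOc.isOpen_compl
    have hx₀O : x₀ ∈ O := by
      rintro ⟨b, hb, hbV⟩
      exact hbV (hFc hb)
    have hNmem : O ×ˢ Tt ∈ nhds (x₀, t₀) := by
      rw [nhds_prod_eq]
      exact Filter.prod_mem_prod (hOo.mem_nhds hx₀O) hTtn
    have hQc : IsClosed {u : Y | u ⊓ y₀ ∈ M} :=
      hMc.preimage (hinf.comp (continuous_id.prodMk continuous_const))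
    have hev : {u : Y | u ⊓ y₀ ∈ M} ∈ Filter.map K (nhds (x₀, t₀)) := by
      rw [Filter.mem_map]
      refine Filter.mem_of_superset hNmem ?_
      rintro ⟨x, t⟩ ⟨hxO, htT⟩
      have himg : ∀ a ∈ (fun x' => H (x', t)) '' {x' : X | x ≤ x'}, a ⊓ y₀ ∈ W := by
        rintro a ⟨x', hxx', rfl⟩
        have hx'V : x' ∈ Vu := by
          by_contra hnot
          exact hxO ⟨x', hxx', hnot⟩
        obtain ⟨i, hiFc, hx'Vi⟩ : ∃ i ∈ Fc, x' ∈ V i := by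
          simpa [hVu, Set.mem_iUnion] using hx'V
        have htTi : t ∈ T i := by
          have h' := htT
          simp only [hTt, Set.mem_iInter] at h'
          exact h' i hiFc
        exact interior_subset (hVT i ⟨hx'Vi, htTi⟩)
      show K (x, t) ∈ {u : Y | u ⊓ y₀ ∈ M}
      have hne : ((fun x' => H (x', t)) '' {x' : X | x ≤ x'}).Nonempty :=
        ⟨H (x, t), ⟨x, le_refl x, rfl⟩⟩
      refine aux_sInf_mem hinf hne hQc ?_
      intro F hF
      have hmap : (F.inf' hF fun a => (a : Y)) ⊓ y₀ = F.inf' hF fun a => (a : Y) ⊓ y₀ := by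
        let φ : InfHom Y Y := ⟨fun u => u ⊓ y₀, fun a b => by
          rw [inf_inf_distrib_right]⟩
        exact map_finset_inf' φ hF _
      show (F.inf' hF fun a => (a : Y)) ⊓ y₀ ∈ M
      rw [hmap]
      apply hWM
      exact Finset.inf'_mem W hWinf F hF _ fun a _ => himg a a.2
    have h' := aux_clusterPt_mem hz hev hQc
    exact hMN h'
  have hyz : y₀ ≤ z := by
    have heq : z ⊓ y₀ = y₀ := by
      by_contra hne
      have hmem : ({z ⊓ y₀}ᶜ : Set Y) ∈ nhds y₀ :=
        isOpen_compl_singleton.mem_nhds (by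
          simp only [Set.mem_compl_iff, Set.mem_singleton_iff]
          exact fun h => hne h.symm)
      exact hB _ hmem rfl
    exact inf_eq_right.1 heq
  exact le_antisymm hzy hyz
end

section
/- Let X be a compact pospace whose partial order is lower open, and let Y be a complete lattice carrying a Lawson-lattice topology. If f, g : X → Y are monotone continuous maps that are homotopic as continuous maps (there is a continuous H : X × [0,1] → Y with H(·,0) = f and H(·,1) = g), then f and g are homotopic through monotone maps: there exists a continuous K : X × [0,1] → Y with K(·,0) = f, K(·,1) = g, and K(·,t) monotone for every t ∈ [0,1]. -/
open unitInterval Set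

set_option linter.unusedSectionVars false



section Aux
variable {Y : Type*} [CompleteLattice Y] [TopologicalSpace Y] [T2Space Y]

lemma aux_isClosed_ge (hinf : Continuous fun p : Y × Y => p.1 ⊓ p.2) (e : Y) :
    IsClosed {y : Y | e ≤ y} := by
  have : {y : Y | e ≤ y} = {y : Y | e ⊓ y = e} := by
    ext y; simp [inf_eq_left]
  rw [this]
  exact isClosed_eq (hinf.comp (continuous_const.prodMk continuous_id)) continuous_const

lemma aux_isClosed_le (hinf : Continuous fun p : Y × Y => p.1 ⊓ p.2) (e : Y) :
    IsClosed {y : Y | y ≤ e} := by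
  have : {y : Y | y ≤ e} = {y : Y | y ⊓ e = y} := by
    ext y; simp [inf_eq_left]
  rw [this]
  exact isClosed_eq (hinf.comp (continuous_id.prodMk continuous_const)) continuous_id

lemma aux_min_mem (hinf : Continuous fun p : Y × Y => p.1 ⊓ p.2) {T : Set Y}
    (hc : IsCompact T) (hcl : IsClosed T) (hne : T.Nonempty)
    (hsl : ∀ a ∈ T, ∀ b ∈ T, a ⊓ b ∈ T) : sInf T ∈ T := by
  haveI : Nonempty T := hne.to_subtype
  have hinter : (⋂ e : T, (T ∩ {y | y ≤ (e : Y)})).Nonempty := by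
    apply IsCompact.nonempty_iInter_of_directed_nonempty_isCompact_isClosed
    · rintro e₁ e₂
      refine ⟨⟨e₁ ⊓ e₂, hsl _ e₁.2 _ e₂.2⟩, ?_, ?_⟩
      · rintro y ⟨hyT, hy⟩; exact ⟨hyT, le_trans hy inf_le_left⟩
      · rintro y ⟨hyT, hy⟩; exact ⟨hyT, le_trans hy inf_le_right⟩
    · exact fun e => ⟨e, e.2, le_refl _⟩
    · exact fun e => hc.inter_right (aux_isClosed_le hinf _)
    · exact fun e => hcl.inter (aux_isClosed_le hinf _)
  obtain ⟨z, hz⟩ := hinter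
  simp only [Set.mem_iInter] at hz
  have hzT : z ∈ T := (hz ⟨_, hne.choose_spec⟩).1
  have : sInf T = z :=
    le_antisymm (sInf_le hzT) (le_sInf fun b hb => (hz ⟨b, hb⟩).2)
  rw [this]; exact hzT

lemma aux_closure_semilattice (hinf : Continuous fun p : Y × Y => p.1 ⊓ p.2) (D : Set Y)
    (h : ∀ a ∈ D, ∀ b ∈ D, a ⊓ b ∈ D) :
    ∀ a ∈ closure D, ∀ b ∈ closure D, a ⊓ b ∈ closure D := by
  intro a ha b hb
  have hm : Set.MapsTo (fun p : Y × Y => p.1 ⊓ p.2) (D ×ˢ D) D :=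
    fun p hp => h _ hp.1 _ hp.2
  have := hm.closure hinf
  rw [closure_prod_eq] at this
  have hab : (a, b) ∈ closure D ×ˢ closure D := ⟨ha, hb⟩
  exact this hab

lemma aux_sInf_closure (hinf : Continuous fun p : Y × Y => p.1 ⊓ p.2) (D : Set Y) :
    sInf (closure D) = sInf D := by
  refine le_antisymm (sInf_le_sInf subset_closure) (le_sInf fun b hb => ?_)
  exact closure_minimal (fun y hy => sInf_le hy) (aux_isClosed_ge hinf _) hb

lemma aux_finset_inf_mem {T : Set Y} (hsl : ∀ a ∈ T, ∀ b ∈ T, a ⊓ b ∈ T)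
    {s : Finset Y} (hs : s.Nonempty) (h : ∀ b ∈ s, b ∈ T) : s.inf id ∈ T := by
  induction hs using Finset.Nonempty.cons_induction with
  | singleton a => simpa using h a (by simp)
  | cons a s ha hs ih =>
      rw [Finset.inf_cons]
      exact hsl _ (h a (Finset.mem_cons_self a s)) _
        (ih fun b hb => h b (Finset.mem_cons_of_mem hb))

lemma aux_L1 [CompactSpace Y] (hinf : Continuous fun p : Y × Y => p.1 ⊓ p.2)
    (B : Set Y) (hB : B.Nonempty) :
    sInf B ∈ closure {y | ∃ s : Finset Y, ↑s ⊆ B ∧ s.Nonempty ∧ s.inf id = y} := by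
  classical
  set D := {y | ∃ s : Finset Y, ↑s ⊆ B ∧ s.Nonempty ∧ s.inf id = y} with hD
  have hDsl : ∀ a ∈ D, ∀ b ∈ D, a ⊓ b ∈ D := by
    rintro a ⟨s, hsB, hsne, rfl⟩ b ⟨s', hs'B, hs'ne, rfl⟩
    exact ⟨s ∪ s', by push_cast; exact Set.union_subset hsB hs'B,
      hsne.mono Finset.subset_union_left, Finset.inf_union⟩
  have hDne : D.Nonempty := by
    obtain ⟨b, hb⟩ := hB
    exact ⟨b, {b}, by simpa using hb, Finset.singleton_nonempty b, Finset.inf_singleton⟩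
  have hDinf : sInf D = sInf B := by
    refine le_antisymm (le_sInf fun b hb => sInf_le ?_) (le_sInf ?_)
    · exact ⟨{b}, by simpa using hb, Finset.singleton_nonempty b, Finset.inf_singleton⟩
    · rintro d ⟨s, hsB, hsne, rfl⟩
      exact Finset.le_inf fun b hb => sInf_le (hsB hb)
  have hmin := aux_min_mem hinf (isClosed_closure.isCompact) isClosed_closure
    hDne.closure (aux_closure_semilattice hinf D hDsl)
  rwa [aux_sInf_closure hinf, hDinf] at hmin

lemma aux_L3 [CompactSpace Y] (hinf : Continuous fun p : Y × Y => p.1 ⊓ p.2)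
    {T : Set Y} (hcl : IsClosed T) (hsl : ∀ a ∈ T, ∀ b ∈ T, a ⊓ b ∈ T)
    {B : Set Y} (hBT : B ⊆ T) (hBne : B.Nonempty) : sInf B ∈ T := by
  have h1 := aux_L1 hinf B hBne
  refine closure_minimal ?_ hcl h1
  rintro y ⟨s, hsB, hsne, rfl⟩
  exact aux_finset_inf_mem hsl hsne fun b hb => hBT (hsB hb)

lemma aux_L2 [CompactSpace Y] (hinf : Continuous fun p : Y × Y => p.1 ⊓ p.2)
    (A : Set Y) (a : Y) (ha : a ∈ A) (G : Set Y) (hG : IsOpen G) (hmem : sInf A ∈ G) :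
    ∃ s : Finset Y, ↑s ⊆ A ∧ a ⊓ s.inf id ∈ G := by
  classical
  set D := {y | ∃ s : Finset Y, ↑s ⊆ A ∧ a ⊓ s.inf id = y} with hD
  have hDsl : ∀ u ∈ D, ∀ v ∈ D, u ⊓ v ∈ D := by
    rintro u ⟨s, hsA, rfl⟩ v ⟨s', hs'A, rfl⟩
    refine ⟨s ∪ s', by push_cast; exact Set.union_subset hsA hs'A, ?_⟩
    rw [Finset.inf_union, ← inf_inf_distrib_left]
  have hDne : D.Nonempty := ⟨a, ∅, by simp⟩
  have hDinf : sInf D = sInf A := by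
    refine le_antisymm (le_sInf fun b hb => ?_) (le_sInf ?_)
    · calc sInf D ≤ a ⊓ ({b} : Finset Y).inf id := sInf_le ⟨{b}, by simpa using hb, rfl⟩
        _ ≤ b := by simp
    · rintro d ⟨s, hsA, rfl⟩
      exact le_inf (sInf_le ha) (Finset.le_inf fun b hb => sInf_le (hsA hb))
  have hmin := aux_min_mem hinf (isClosed_closure.isCompact) isClosed_closure
    hDne.closure (aux_closure_semilattice hinf D hDsl)
  rw [aux_sInf_closure hinf, hDinf] at hmin
  obtain ⟨d, hdG, hdD⟩ := _root_.mem_closure_iff.mp hmin G hG hmem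
  obtain ⟨s, hsA, rfl⟩ := hdD
  exact ⟨s, hsA, hdG⟩

lemma aux_cont_finset_inf {α ι : Type*} [TopologicalSpace α]
    (hinf : Continuous fun p : Y × Y => p.1 ⊓ p.2)
    (s : Finset ι) (f : ι → α → Y) (hf : ∀ i ∈ s, Continuous (f i)) :
    Continuous fun x => s.inf fun i => f i x := by
  classical
  induction s using Finset.induction_on with
  | empty => simpa using continuous_const
  | insert _ _ ha ih =>
      simp only [Finset.inf_insert]
      exact hinf.comp ((hf _ (Finset.mem_insert_self _ _)).prodMk
        (ih fun i hi => hf i (Finset.mem_insert_of_mem hi)))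

end Aux

/-- Let `X` be a compact pospace with lower open partial order and `Y` a complete
lattice carrying a Lawson-lattice topology.  Monotone continuous maps `f, g : X → Y`
that are homotopic as continuous maps are homotopic through monotone maps. -/
theorem stmt_8 {X Y : Type*} [TopologicalSpace X] [PartialOrder X] [CompactSpace X]
    (hpos : IsClosed {p : X × X | p.1 ≤ p.2})
    (hlo : ∀ V : Set X, IsOpen V → IsOpen {x : X | ∃ v ∈ V, x ≤ v})
    [CompleteLattice Y] [TopologicalSpace Y] [CompactSpace Y] [T2Space Y]
    (hinf : Continuous fun p : Y × Y => p.1 ⊓ p.2)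
    (hbasis : ∀ y : Y, (nhds y).HasBasis
      (fun s : Set Y => s ∈ nhds y ∧ ∀ a ∈ s, ∀ b ∈ s, a ⊓ b ∈ s) id)
    (f g : X → Y) (hf : Continuous f) (hfm : Monotone f)
    (hg : Continuous g) (hgm : Monotone g)
    (H : X × I → Y) (hH : Continuous H)
    (hH0 : ∀ x, H (x, 0) = f x) (hH1 : ∀ x, H (x, 1) = g x) :
    ∃ K : X × I → Y, Continuous K ∧
      (∀ x, K (x, 0) = f x) ∧ (∀ x, K (x, 1) = g x) ∧
      (∀ t : I, Monotone fun x : X => K (x, t)) := by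
  classical
  haveI : T2Space X := by
    rw [t2_iff_isClosed_diagonal]
    have hdiag : Set.diagonal X = {p : X × X | p.1 ≤ p.2} ∩ {p : X × X | p.2 ≤ p.1} := by
      ext p
      simp only [Set.mem_diagonal_iff, Set.mem_inter_iff, Set.mem_setOf_eq]
      constructor
      · rintro h; exact ⟨le_of_eq h, ge_of_eq h⟩
      · rintro ⟨h1, h2⟩; exact le_antisymm h1 h2
    rw [hdiag]
    exact hpos.inter (hpos.preimage continuous_swap)
  have hIci : ∀ x : X, IsClosed (Ici x) := by
    intro x
    have : Ici x = (fun x' => ((x, x') : X × X)) ⁻¹' {p : X × X | p.1 ≤ p.2} :=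
      Set.ext fun _ => Iff.rfl
    rw [this]; exact hpos.preimage (continuous_const.prodMk continuous_id)
  have hdowncl : ∀ C : Set X, IsClosed C → IsClosed {x : X | ∃ x' ∈ C, x ≤ x'} := by
    intro C hC
    have h1 : IsCompact ({p : X × X | p.1 ≤ p.2} ∩ (Prod.snd ⁻¹' C)) :=
      (hpos.inter (hC.preimage continuous_snd)).isCompact
    have h2 := h1.image continuous_fst
    have heq : {x : X | ∃ x' ∈ C, x ≤ x'} =
        Prod.fst '' ({p : X × X | p.1 ≤ p.2} ∩ (Prod.snd ⁻¹' C)) := by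
      ext x
      constructor
      · rintro ⟨x', hx'C, hle⟩; exact ⟨(x, x'), ⟨hle, hx'C⟩, rfl⟩
      · rintro ⟨p, ⟨hle, hpC⟩, rfl⟩; exact ⟨p.2, hpC, hle⟩
    rw [heq]; exact h2.isClosed
  set K : X × I → Y := fun p => sInf ((fun x' => H (x', p.2)) '' Ici p.1) with hKdef
  refine ⟨K, ?_, ?_, ?_, ?_⟩
  · -- Continuity
    rw [continuous_iff_continuousAt]
    rintro ⟨x₀, t₀⟩
    rw [ContinuousAt, (nhds_basis_opens (K (x₀, t₀))).tendsto_right_iff]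
    rintro W ⟨hyW, hWopen⟩
    obtain ⟨s₁, hs₁nhds, hs₁cl, hs₁W⟩ := exists_mem_nhds_isClosed_subset (hWopen.mem_nhds hyW)
    obtain ⟨S, ⟨hSnhds, hSsl⟩, hSs⟩ := (hbasis (K (x₀, t₀))).mem_iff.mp hs₁nhds
    set T := closure S with hTdef
    have hTcl : IsClosed T := isClosed_closure
    have hTsl : ∀ a ∈ T, ∀ b ∈ T, a ⊓ b ∈ T := aux_closure_semilattice hinf S hSsl
    have hTW : T ⊆ W := (closure_minimal hSs hs₁cl).trans hs₁W
    have hTint : K (x₀, t₀) ∈ interior T :=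
      mem_interior_iff_mem_nhds.mpr (Filter.mem_of_superset hSnhds subset_closure)
    have key : ∀ a : X, x₀ ≤ a → ∃ (C : Finset X) (N : Set X) (V : X → Set X) (Ta : Set I),
        (∀ c ∈ C, x₀ ≤ c) ∧ IsOpen N ∧ a ∈ N ∧ (∀ c ∈ C, IsOpen (V c) ∧ c ∈ V c) ∧
        Ta ∈ nhds t₀ ∧
        ∀ u ∈ N, ∀ gf : X → X, (∀ c ∈ C, gf c ∈ V c) → ∀ t ∈ Ta,
          H (u, t) ⊓ C.inf (fun c => H (gf c, t)) ∈ interior T := by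
      intro a ha
      have haA : H (a, t₀) ∈ (fun x' => H (x', t₀)) '' Ici x₀ := ⟨a, ha, rfl⟩
      obtain ⟨s', hs'A, hs'mem⟩ := aux_L2 hinf _ _ haA _ isOpen_interior hTint
      have hwit : ∀ b ∈ s', ∃ c : X, x₀ ≤ c ∧ H (c, t₀) = b := by
        intro b hb
        obtain ⟨c, hc, hcb⟩ := hs'A hb
        exact ⟨c, hc, hcb⟩
      choose w hw1 hw2 using hwit
      set C : Finset X := s'.attach.image (fun b => w b.1 b.2) with hCdef
      have hCIci : ∀ c ∈ C, x₀ ≤ c := by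
        intro c hc
        simp only [hCdef, Finset.mem_image, Finset.mem_attach, true_and] at hc
        obtain ⟨b, rfl⟩ := hc
        exact hw1 _ _
      have hCeq : C.inf (fun c => H (c, t₀)) = s'.inf id := by
        rw [hCdef, Finset.inf_image]
        rw [show ((fun c => H (c, t₀)) ∘ fun b : {x // x ∈ s'} => w b.1 b.2)
            = fun b : {x // x ∈ s'} => id (b.1 : Y) from funext fun b => hw2 b.1 b.2]
        exact Finset.inf_attach s' id
      set v₀ : {c // c ∈ C} → X := fun c => (c : X) with hv₀
      set Φ : X × (({c // c ∈ C} → X) × I) → Y :=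
        fun q => H (q.1, q.2.2) ⊓ C.attach.inf (fun c => H (q.2.1 c, q.2.2)) with hΦ
      have hΦcont : Continuous Φ := by
        rw [hΦ]
        exact hinf.comp (Continuous.prodMk
          (hH.comp (continuous_fst.prodMk (continuous_snd.comp continuous_snd)))
          (aux_cont_finset_inf hinf C.attach _ fun c _ =>
            hH.comp (((continuous_apply c).comp (continuous_fst.comp continuous_snd)).prodMk
              (continuous_snd.comp continuous_snd))))
      have hΦval : Φ (a, (v₀, t₀)) ∈ interior T := by
        have hval : Φ (a, (v₀, t₀)) = H (a, t₀) ⊓ s'.inf id := by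
          have h1 : (C.attach.inf fun c => H ((c : X), t₀)) = C.inf fun c => H (c, t₀) :=
            Finset.inf_attach C fun c => H (c, t₀)
          simp only [hΦ, hv₀, h1, hCeq]
        rw [hval]; exact hs'mem
      have hpre : Φ ⁻¹' interior T ∈ nhds (a, (v₀, t₀)) :=
        hΦcont.continuousAt.preimage_mem_nhds (isOpen_interior.mem_nhds hΦval)
      rw [mem_nhds_prod_iff] at hpre
      obtain ⟨N', hN', R, hR, hNR⟩ := hpre
      rw [mem_nhds_prod_iff] at hR
      obtain ⟨P, hP, Ta, hTa, hPT⟩ := hR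
      rw [nhds_pi, Filter.mem_pi] at hP
      obtain ⟨Iset, hIfin, tt, htt, hIsub⟩ := hP
      refine ⟨C, interior N', fun c => if h : c ∈ C then interior (tt ⟨c, h⟩) else Set.univ,
        Ta, hCIci, isOpen_interior, mem_interior_iff_mem_nhds.mpr hN', ?_, hTa, ?_⟩
      · intro c hc
        simp only [dif_pos hc]
        exact ⟨isOpen_interior, mem_interior_iff_mem_nhds.mpr
          (show tt ⟨c, hc⟩ ∈ nhds c from htt ⟨c, hc⟩)⟩
      · intro u hu gf hgf t ht
        have hvec : (fun c : {c // c ∈ C} => gf (c : X)) ∈ P := by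
          apply hIsub
          rw [Set.mem_pi]
          intro d _
          have hd := hgf (d : X) d.2
          simp only [dif_pos d.2] at hd
          have hdd : (⟨(d : X), d.2⟩ : {c // c ∈ C}) = d := Subtype.ext rfl
          rw [hdd] at hd
          exact interior_subset hd
        have hmem : (u, ((fun c : {c // c ∈ C} => gf (c : X)), t)) ∈ Φ ⁻¹' interior T :=
          hNR ⟨interior_subset hu, hPT ⟨hvec, ht⟩⟩
        have hval : Φ (u, ((fun c : {c // c ∈ C} => gf (c : X)), t))
            = H (u, t) ⊓ C.inf (fun c => H (gf c, t)) := by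
          have h1 : (C.attach.inf fun c => H (gf (c : X), t)) = C.inf fun c => H (gf c, t) :=
            Finset.inf_attach C fun c => H (gf c, t)
          simp only [hΦ, h1]
        rw [← hval]
        exact hmem
    choose Cf Nf Vf Taf hCx hNo hNm hVp hTan hkey using key
    obtain ⟨J, hJ⟩ := (hIci x₀).isCompact.elim_finite_subcover
      (fun i : Ici x₀ => Nf (i : X) i.2) (fun i => hNo _ _)
      (fun a ha => Set.mem_iUnion.mpr ⟨⟨a, ha⟩, hNm _ _⟩)
    set Big : Set X := ⋃ i ∈ J, Nf (i : X) i.2 with hBig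
    have hBigOpen : IsOpen Big := isOpen_biUnion fun i _ => hNo _ _
    set U₁ : Set X := {x : X | ∃ x' ∈ Bigᶜ, x ≤ x'}ᶜ with hU₁
    have hU₁open : IsOpen U₁ := (hdowncl _ hBigOpen.isClosed_compl).isOpen_compl
    have hU₁mem : x₀ ∈ U₁ := by
      simp only [hU₁, Set.mem_compl_iff, Set.mem_setOf_eq]
      rintro ⟨x', hx'Big, hle⟩
      exact hx'Big (hJ hle)
    set U₂ : Set X := ⋂ i ∈ J, ⋂ c ∈ Cf (i : X) i.2, {x : X | ∃ v ∈ Vf (i : X) i.2 c, x ≤ v}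
      with hU₂
    have hU₂open : IsOpen U₂ :=
      isOpen_biInter_finset fun i _ => isOpen_biInter_finset fun c hc =>
        hlo _ (hVp (i : X) i.2 c hc).1
    have hU₂mem : x₀ ∈ U₂ := by
      simp only [hU₂, Set.mem_iInter, Set.mem_setOf_eq]
      intro i hi c hc
      exact ⟨c, (hVp (i : X) i.2 c hc).2, hCx (i : X) i.2 c hc⟩
    have hTmem : (⋂ i ∈ J, Taf (i : X) i.2) ∈ nhds t₀ :=
      (Filter.biInter_finset_mem J).mpr fun i _ => hTan _ _
    refine Filter.eventually_of_mem
      (prod_mem_nhds (((hU₁open.inter hU₂open).mem_nhds ⟨hU₁mem, hU₂mem⟩)) hTmem) ?_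
    rintro ⟨x, t⟩ ⟨⟨hx1, hx2⟩, ht⟩
    simp only [hU₁, Set.mem_compl_iff, Set.mem_setOf_eq] at hx1
    have hup : ∀ u : X, x ≤ u → ∃ i : Ici x₀, ∃ _ : i ∈ J, u ∈ Nf (i : X) i.2 := by
      intro u hu
      have hB : u ∈ Big := by
        by_contra hcon
        exact hx1 ⟨u, hcon, hu⟩
      simpa only [hBig, Set.mem_iUnion] using hB
    have hpick : ∀ i : Ici x₀, i ∈ J → ∀ c ∈ Cf (i : X) i.2,
        ∃ v, v ∈ Vf (i : X) i.2 c ∧ x ≤ v := by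
      intro i hi c hc
      simp only [hU₂, Set.mem_iInter, Set.mem_setOf_eq] at hx2
      obtain ⟨v, hv1, hv2⟩ := hx2 i hi c hc
      exact ⟨v, hv1, hv2⟩
    choose pv hpv1 hpv2 using hpick
    set gfun : ∀ i : Ici x₀, i ∈ J → X → X := fun i hi c =>
      if h : c ∈ Cf (i : X) i.2 then pv i hi c h else x with hgfun
    have hgfV : ∀ (i : Ici x₀) (hi : i ∈ J), ∀ c ∈ Cf (i : X) i.2,
        gfun i hi c ∈ Vf (i : X) i.2 c := by
      intro i hi c hc
      simp only [hgfun, dif_pos hc]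
      exact hpv1 i hi c hc
    have hgfx : ∀ (i : Ici x₀) (hi : i ∈ J), ∀ c ∈ Cf (i : X) i.2, x ≤ gfun i hi c := by
      intro i hi c hc
      simp only [hgfun, dif_pos hc]
      exact hpv2 i hi c hc
    set Es : Set Y := {y | ∃ u, x ≤ u ∧ ∃ i : Ici x₀, ∃ hi : i ∈ J, u ∈ Nf (i : X) i.2 ∧
      y = H (u, t) ⊓ (Cf (i : X) i.2).inf (fun c => H (gfun i hi c, t))} with hEs
    have hEsT : Es ⊆ T := by
      rintro y ⟨u, hxu, i, hi, huN, rfl⟩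
      have ht' : t ∈ Taf (i : X) i.2 := by
        simp only [Set.mem_iInter] at ht
        exact ht i hi
      exact interior_subset (hkey (i : X) i.2 u huN _ (hgfV i hi) t ht')
    have hEsne : Es.Nonempty := by
      obtain ⟨i, hi, hN⟩ := hup x le_rfl
      exact ⟨_, x, le_rfl, i, hi, hN, rfl⟩
    have hEinf : sInf Es = K (x, t) := by
      apply le_antisymm
      · refine le_sInf ?_
        rintro b ⟨u, hu, rfl⟩
        obtain ⟨i, hi, hN⟩ := hup u hu
        exact le_trans (sInf_le (show _ ∈ Es from ⟨u, hu, i, hi, hN, rfl⟩)) inf_le_left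
      · refine le_sInf ?_
        rintro y ⟨u, hu, i, hi, huN, rfl⟩
        exact le_inf (sInf_le ⟨u, hu, rfl⟩)
          (Finset.le_inf fun c hc => sInf_le ⟨gfun i hi c, hgfx i hi c hc, rfl⟩)
    have hfin := aux_L3 hinf hTcl hTsl hEsT hEsne
    rw [hEinf] at hfin
    exact hTW hfin
  · intro x
    show sInf ((fun x' => H (x', (0 : I))) '' Ici x) = f x
    have himg : (fun x' => H (x', (0 : I))) '' Ici x = f '' Ici x :=
      Set.image_congr fun a _ => hH0 a
    rw [himg]
    refine le_antisymm (sInf_le ⟨x, self_mem_Ici, rfl⟩) (le_sInf ?_)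
    rintro y ⟨x', hx', rfl⟩
    exact hfm hx'
  · intro x
    show sInf ((fun x' => H (x', (1 : I))) '' Ici x) = g x
    have himg : (fun x' => H (x', (1 : I))) '' Ici x = g '' Ici x :=
      Set.image_congr fun a _ => hH1 a
    rw [himg]
    refine le_antisymm (sInf_le ⟨x, self_mem_Ici, rfl⟩) (le_sInf ?_)
    rintro y ⟨x', hx', rfl⟩
    exact hgm hx'
  · intro t x₁ x₂ hx
    exact sInf_le_sInf (Set.image_mono (Ici_subset_Ici.mpr hx))
end

section
/- Let X be a compact Hausdorff topological space equipped with a preorder, and let Y be a complete lattice carrying a Lawson-lattice topology. Suppose g₁, g₂ : X → Y are monotone continuous maps that are homotopic through monotone maps. Then there exists a monotone continuous map m : X → Y that future homotopes to both g₁ and g₂: there exist continuous maps h₁, h₂ : X × [0,1] → Y, each monotone with respect to the product order (the given preorder on X and the standard order on [0,1]), with h₁(·,0) = m, h₁(·,1) = g₁, h₂(·,0) = m, and h₂(·,1) = g₂. -/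
open unitInterval

section Helpers

variable {Y : Type*} [CompleteLattice Y] [TopologicalSpace Y] [CompactSpace Y] [T2Space Y]

set_option linter.unusedSectionVars false

lemma myIsClosed_Iic (hinf : Continuous fun p : Y × Y => p.1 ⊓ p.2) (y : Y) :
    IsClosed (Set.Iic y) := by
  have h : Set.Iic y = (fun z : Y => (z ⊓ y, z)) ⁻¹' {p : Y × Y | p.1 = p.2} := by
    ext z
    simp only [Set.mem_Iic, Set.mem_preimage, Set.mem_setOf_eq]
    exact ⟨fun h => inf_eq_left.mpr h, fun h => inf_eq_left.mp h⟩
  rw [h]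
  exact (isClosed_eq continuous_fst continuous_snd).preimage
    ((hinf.comp (continuous_id.prodMk continuous_const)).prodMk continuous_id)

lemma myIsClosed_Ici (hinf : Continuous fun p : Y × Y => p.1 ⊓ p.2) (y : Y) :
    IsClosed (Set.Ici y) := by
  have h : Set.Ici y = (fun z : Y => (y ⊓ z, z)) ⁻¹' {p : Y × Y | p.1 = y} := by
    ext z
    simp only [Set.mem_Ici, Set.mem_preimage, Set.mem_setOf_eq]
    exact ⟨fun h => inf_eq_left.mpr h, fun h => inf_eq_left.mp h⟩
  rw [h]
  exact (isClosed_eq continuous_fst continuous_const).preimage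
    ((hinf.comp (continuous_const.prodMk continuous_id)).prodMk continuous_id)

lemma cont_finsetInf (hinf : Continuous fun p : Y × Y => p.1 ⊓ p.2)
    {X : Type*} [TopologicalSpace X] {ι : Type*} (F : Finset ι) (f : ι → X → Y)
    (hf : ∀ i, Continuous (f i)) : Continuous fun x => F.inf fun i => f i x := by
  classical
  induction F using Finset.induction_on with
  | empty => simp only [Finset.inf_empty]; exact continuous_const
  | @insert a s ha ih =>
    simp only [Finset.inf_insert]
    exact hinf.comp ((hf a).prodMk ih)

lemma exists_good_nhd (hinf : Continuous fun p : Y × Y => p.1 ⊓ p.2)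
    (hbasis : ∀ y : Y, (nhds y).HasBasis
      (fun s : Set Y => s ∈ nhds y ∧ ∀ a ∈ s, ∀ b ∈ s, a ⊓ b ∈ s) id)
    (a : Y) {V : Set Y} (hV : V ∈ nhds a) :
    ∃ W ∈ nhds a, IsClosed W ∧ (∀ b ∈ W, ∀ c ∈ W, b ⊓ c ∈ W) ∧ W ⊆ V := by
  obtain ⟨C, hC, hCc, hCV⟩ := exists_mem_nhds_isClosed_subset hV
  obtain ⟨S, ⟨hS, hSinf⟩, hSC⟩ := (hbasis a).mem_iff.mp hC
  refine ⟨closure S, Filter.mem_of_superset hS subset_closure, isClosed_closure, ?_,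
    (closure_minimal hSC hCc).trans hCV⟩
  intro b hb c hc
  exact map_mem_closure₂ hinf hb hc hSinf

lemma inf_mem_closure_finsetInf (hinf : Continuous fun p : Y × Y => p.1 ⊓ p.2)
    {ι : Type*} (f : ι → Y) (s : Set ι) (F₀ : Finset ι) (hF₀ : ↑F₀ ⊆ s) :
    (⨅ i ∈ s, f i) ∈
      closure {y : Y | ∃ F : Finset ι, ↑F ⊆ s ∧ F₀ ⊆ F ∧ y = F.inf f} := by
  classical
  set P := {F : Finset ι // ↑F ⊆ s ∧ F₀ ⊆ F} with hP
  have hPne : Nonempty P := ⟨⟨F₀, hF₀, Finset.Subset.refl _⟩⟩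
  set T : P → Set Y :=
    fun F => {y : Y | ∃ F' : Finset ι, ↑F' ⊆ s ∧ F.1 ⊆ F' ∧ y = F'.inf f} with hT
  set Z : P → Set Y := fun F => closure (T F) with hZ
  have hdir : Directed (· ⊇ ·) Z := by
    intro F G
    refine ⟨⟨F.1 ∪ G.1, ?_, F.2.2.trans Finset.subset_union_left⟩, ?_, ?_⟩
    · intro x hx
      rcases Finset.mem_coe.mp (by exact_mod_cast hx) with h
      rcases Finset.mem_union.mp h with h | h
      · exact F.2.1 (Finset.mem_coe.mpr h)
      · exact G.2.1 (Finset.mem_coe.mpr h)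
    · exact closure_mono fun y ⟨F', h1, h2, h3⟩ =>
        ⟨F', h1, Finset.subset_union_left.trans h2, h3⟩
    · exact closure_mono fun y ⟨F', h1, h2, h3⟩ =>
        ⟨F', h1, Finset.subset_union_right.trans h2, h3⟩
  have hne : ∀ F : P, (Z F).Nonempty :=
    fun F => ⟨F.1.inf f, subset_closure ⟨F.1, F.2.1, Finset.Subset.refl _, rfl⟩⟩
  obtain ⟨c, hc⟩ := IsCompact.nonempty_iInter_of_directed_nonempty_isCompact_isClosed
    Z hdir hne (fun F => isClosed_closure.isCompact) (fun F => isClosed_closure)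
  have hcZ : ∀ F : P, c ∈ Z F := fun F => Set.mem_iInter.mp hc F
  have hlb : ∀ i ∈ s, c ≤ f i := by
    intro i hi
    have hins : (↑(insert i F₀) : Set ι) ⊆ s := by
      intro x hx
      rcases Finset.mem_coe.mp (by exact_mod_cast hx) with h
      rcases Finset.mem_insert.mp h with h | h
      · exact h ▸ hi
      · exact hF₀ (Finset.mem_coe.mpr h)
    set Fi : P := ⟨insert i F₀, hins, Finset.subset_insert _ _⟩ with hFi
    have hmem : c ∈ Z Fi := hcZ _
    have hsub : T Fi ⊆ Set.Iic (f i) := by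
      rintro y ⟨F', h1, h2, rfl⟩
      exact Finset.inf_le (h2 (Finset.mem_insert_self i F₀))
    exact closure_minimal hsub (myIsClosed_Iic hinf (f i)) hmem
  have hglb : ∀ b : Y, (∀ i ∈ s, b ≤ f i) → b ≤ c := by
    intro b hb
    have hmem : c ∈ Z ⟨F₀, hF₀, Finset.Subset.refl _⟩ := hcZ _
    have hsub : T ⟨F₀, hF₀, Finset.Subset.refl _⟩ ⊆ Set.Ici b := by
      rintro y ⟨F', h1, h2, rfl⟩
      exact Finset.le_inf fun i hi => hb i (h1 (Finset.mem_coe.mpr hi))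
    exact closure_minimal hsub (myIsClosed_Ici hinf b) hmem
  have hceq : c = ⨅ i ∈ s, f i :=
    le_antisymm (le_iInf₂ hlb) (hglb _ fun i hi => iInf₂_le i hi)
  have hfin := hcZ ⟨F₀, hF₀, Finset.Subset.refl _⟩
  rw [hceq] at hfin
  exact hfin

lemma keyN {X : Type*} [TopologicalSpace X]
    (hinf : Continuous fun p : Y × Y => p.1 ⊓ p.2)
    (hbasis : ∀ y : Y, (nhds y).HasBasis
      (fun s : Set Y => s ∈ nhds y ∧ ∀ a ∈ s, ∀ b ∈ s, a ⊓ b ∈ s) id)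
    (H : X × I → Y) (hH : Continuous H) :
    Continuous fun p : X × I => ⨅ s ∈ Set.Iic p.2, H (p.1, s) := by
  classical
  set N : X × I → Y := fun p => ⨅ s ∈ Set.Iic p.2, H (p.1, s) with hNdef
  rw [continuous_iff_continuousAt]
  rintro ⟨x₀, r₀⟩
  set a := N (x₀, r₀) with ha
  rw [ContinuousAt, Filter.tendsto_def]
  intro V hV
  obtain ⟨W, hWn, hWc, hWinf, hWV⟩ := exists_good_nhd hinf hbasis a hV
  have haLe : ∀ s ∈ Set.Iic r₀, a ≤ H (x₀, s) := fun s hs => iInf₂_le s hs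
  -- tube lemma
  have hQopen : IsOpen {q : (Y × X) × I | q.1.1 ⊓ H (q.1.2, q.2) ∈ interior W} := by
    apply isOpen_interior.preimage
    exact hinf.comp ((continuous_fst.comp continuous_fst).prodMk
      (hH.comp ((continuous_snd.comp continuous_fst).prodMk continuous_snd)))
  have hsub : ({(a, x₀)} : Set (Y × X)) ×ˢ Set.Iic r₀ ⊆
      {q : (Y × X) × I | q.1.1 ⊓ H (q.1.2, q.2) ∈ interior W} := by
    rintro ⟨⟨y, x⟩, s⟩ ⟨hyx, hs⟩
    simp only [Set.mem_singleton_iff, Prod.mk.injEq] at hyx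
    obtain ⟨rfl, rfl⟩ := hyx
    simp only [Set.mem_setOf_eq]
    rw [inf_eq_left.mpr (haLe s hs)]
    exact mem_interior_iff_mem_nhds.mpr hWn
  obtain ⟨u, J, huo, hJo, hau, hJ, huv⟩ := generalized_tube_lemma isCompact_singleton
    (isClosed_Iic.isCompact) hQopen hsub
  obtain ⟨O, U, hOo, hUo, haO, hxU, hOU⟩ :=
    isOpen_prod_iff.mp huo a x₀ (hau (Set.mem_singleton _))
  have htube : ∀ y ∈ O, ∀ x ∈ U, ∀ s ∈ J, y ⊓ H (x, s) ∈ W := by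
    intro y hy x hx s hs
    have hm : ((y, x), s) ∈ u ×ˢ J := ⟨hOU (Set.mk_mem_prod hy hx), hs⟩
    exact interior_subset (huv hm)
  -- {r | Iic r ⊆ J} is a neighborhood of r₀
  have hRJ : {r : I | Set.Iic r ⊆ J} ∈ nhds r₀ := by
    by_cases hc : Jᶜ = ∅
    · refine Filter.univ_mem' fun r => ?_
      intro s _
      by_contra hsJ
      exact absurd (Set.mem_compl hsJ) (by rw [hc]; exact Set.notMem_empty s)
    · obtain ⟨ρ, hρc, hρmin⟩ := (hJo.isClosed_compl.isCompact).exists_isLeast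
        (Set.nonempty_iff_ne_empty.mpr hc)
      have hr₀ρ : r₀ < ρ := lt_of_not_ge fun h => hρc (hJ h)
      refine Filter.mem_of_superset (isOpen_Iio.mem_nhds hr₀ρ) ?_
      intro r hr s hs
      by_contra hsJ
      exact lt_irrefl ρ
        (((hρmin (Set.mem_compl hsJ)).trans (Set.mem_Iic.mp hs)).trans_lt (Set.mem_Iio.mp hr))
  -- choose a finite approximating set F
  have hIic0 : Set.Iic (0 : I) = {0} := by
    ext s
    simp only [Set.mem_Iic, Set.mem_singleton_iff]
    exact ⟨fun h => le_antisymm h nonneg', fun h => h.le⟩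
  have hF : ∃ F : Finset I, F.Nonempty ∧ (↑F : Set I) ⊆ Set.Iic r₀ ∧
      (F.inf fun s => H (x₀, s)) ∈ O ∧ {r : I | (↑F : Set I) ⊆ Set.Iic r} ∈ nhds r₀ := by
    rcases eq_or_lt_of_le (nonneg' : (0 : I) ≤ r₀) with h0 | h0
    · subst h0
      have ha0 : a = H (x₀, 0) := by
        rw [ha, hNdef]
        simp [hIic0]
      refine ⟨{0}, Finset.singleton_nonempty _, by simp, ?_, ?_⟩
      · simpa [Finset.inf_singleton, ← ha0] using haO
      · refine Filter.univ_mem' fun r => ?_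
        intro s hs
        have : s = 0 := by simpa using hs
        subst this
        exact nonneg'
    · -- left continuity : a = ⨅ over Iio r₀
      have haeq : a = ⨅ s ∈ Set.Iic r₀, H (x₀, s) := rfl
      have hIio : a = ⨅ s ∈ Set.Iio r₀, H (x₀, s) := by
        apply le_antisymm
        · exact le_iInf₂ fun s hs => haLe s (Set.mem_Iic.mpr (Set.mem_Iio.mp hs).le)
        · rw [haeq]
          refine le_iInf₂ fun s hs => ?_
          have hs' : s ≤ r₀ := Set.mem_Iic.mp hs
          rcases lt_or_eq_of_le hs' with hlt | rfl
          · exact iInf₂_le s (Set.mem_Iio.mpr hlt)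
          · have hmem : s ∈ closure (Set.Iio s) := by
              have hcl' := closure_Iio' (a := s) ⟨0, h0⟩
              rw [hcl']
              exact Set.self_mem_Iic
            have hmaps : Set.MapsTo (fun t : I => H (x₀, t)) (Set.Iio s)
                (Set.Ici (⨅ t ∈ Set.Iio s, H (x₀, t))) :=
              fun t ht => iInf₂_le t ht
            have := map_mem_closure (hH.comp (continuous_const.prodMk continuous_id))
              hmem hmaps
            rwa [(myIsClosed_Ici hinf _).closure_eq] at this
      have h0mem : (↑({0} : Finset I) : Set I) ⊆ Set.Iio r₀ := by simpa using h0
      have hcl := inf_mem_closure_finsetInf hinf (fun s => H (x₀, s)) (Set.Iio r₀) {0} h0mem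
      rw [← hIio] at hcl
      obtain ⟨y, hyO, hyT⟩ := mem_closure_iff_nhds.mp hcl O (hOo.mem_nhds haO)
      obtain ⟨F, hFs, hF0, rfl⟩ := hyT
      have hFne : F.Nonempty := ⟨0, hF0 (Finset.mem_singleton_self 0)⟩
      refine ⟨F, hFne, fun s hs => Set.mem_Iic.mpr (Set.mem_Iio.mp (hFs hs)).le, hyO, ?_⟩
      have hρ : F.max' hFne < r₀ :=
        Set.mem_Iio.mp (hFs (Finset.mem_coe.mpr (F.max'_mem hFne)))
      refine Filter.mem_of_superset (isOpen_Ioi.mem_nhds hρ) ?_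
      intro r hr s hs
      exact Set.mem_Iic.mpr ((F.le_max' s (Finset.mem_coe.mp hs)).trans (Set.mem_Ioi.mp hr).le)
  obtain ⟨F, hFne, hFIic, hFO, hFnhds⟩ := hF
  have hcontF : Continuous fun x => F.inf fun s => H (x, s) :=
    cont_finsetInf hinf F _ fun s => hH.comp (continuous_id.prodMk continuous_const)
  have hU' : U ∩ (fun x => F.inf fun s => H (x, s)) ⁻¹' O ∈ nhds x₀ :=
    Filter.inter_mem (hUo.mem_nhds hxU)
      (hcontF.continuousAt.preimage_mem_nhds (hOo.mem_nhds hFO))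
  refine Filter.mem_of_superset (prod_mem_nhds hU' (Filter.inter_mem hRJ hFnhds)) ?_
  rintro ⟨x, r⟩ ⟨⟨hxUm, hxO⟩, hrJ, hrF⟩
  apply hWV
  set f := fun s : I => H (x, s) with hf
  have hy₀ : F.inf f ∈ O := hxO
  have hcl := inf_mem_closure_finsetInf hinf f (Set.Iic r) F hrF
  have hTW : {y : Y | ∃ F' : Finset I, ↑F' ⊆ Set.Iic r ∧ F ⊆ F' ∧ y = F'.inf f} ⊆ W := by
    rintro y ⟨F', hF's, hFF', rfl⟩
    have hF'ne : F'.Nonempty := hFne.mono hFF'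
    have key : F'.inf f = F'.inf fun s => F.inf f ⊓ f s := by
      apply le_antisymm
      · exact Finset.le_inf fun s hs =>
          le_inf (Finset.inf_mono hFF') (Finset.inf_le hs)
      · exact Finset.inf_mono_fun fun s _ => inf_le_right
    rw [key, ← Finset.inf'_eq_inf hF'ne]
    exact Finset.inf'_mem W hWinf F' hF'ne _
      (fun s hs => htube (F.inf f) hy₀ x hxUm s (hrJ (hF's (Finset.mem_coe.mpr hs))))
  exact closure_minimal hTW hWc hcl

end Helpers

lemma monoN {Y : Type*} [CompleteLattice Y] {X : Type*} [Preorder X] (H : X × I → Y)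
    (hHm : ∀ t : I, Monotone fun x : X => H (x, t)) {x₁ x₂ : X} {r₁ r₂ : I}
    (hx : x₁ ≤ x₂) (hr : r₂ ≤ r₁) :
    (⨅ s ∈ Set.Iic r₁, H (x₁, s)) ≤ ⨅ s ∈ Set.Iic r₂, H (x₂, s) :=
  le_iInf₂ fun s hs =>
    (iInf₂_le s (Set.mem_Iic.mpr ((Set.mem_Iic.mp hs).trans hr))).trans (hHm s hx)

/-- Let `X` be a compact Hausdorff preordered space and `Y` a complete lattice carrying
a Lawson-lattice topology.  If monotone continuous maps `g₁, g₂ : X → Y` are homotopic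
through monotone maps, then some monotone continuous map `m : X → Y` future homotopes
to both `g₁` and `g₂`. -/
theorem stmt_9 {X Y : Type*} [TopologicalSpace X] [Preorder X]
    [CompactSpace X] [T2Space X]
    [CompleteLattice Y] [TopologicalSpace Y] [CompactSpace Y] [T2Space Y]
    (hinf : Continuous fun p : Y × Y => p.1 ⊓ p.2)
    (hbasis : ∀ y : Y, (nhds y).HasBasis
      (fun s : Set Y => s ∈ nhds y ∧ ∀ a ∈ s, ∀ b ∈ s, a ⊓ b ∈ s) id)
    (g₁ g₂ : X → Y) (hg₁ : Continuous g₁) (hg₁m : Monotone g₁)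
    (hg₂ : Continuous g₂) (hg₂m : Monotone g₂)
    (H : X × I → Y) (hH : Continuous H)
    (hH0 : ∀ x, H (x, 0) = g₁ x) (hH1 : ∀ x, H (x, 1) = g₂ x)
    (hHm : ∀ t : I, Monotone fun x : X => H (x, t)) :
    ∃ m : X → Y, Continuous m ∧ Monotone m ∧
      (∃ h₁ : X × I → Y, Continuous h₁ ∧ Monotone h₁ ∧
        (∀ x, h₁ (x, 0) = m x) ∧ (∀ x, h₁ (x, 1) = g₁ x)) ∧
      (∃ h₂ : X × I → Y, Continuous h₂ ∧ Monotone h₂ ∧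
        (∀ x, h₂ (x, 0) = m x) ∧ (∀ x, h₂ (x, 1) = g₂ x)) := by
  classical
  have hIic1 : Set.Iic (1 : I) = Set.univ := by
    ext s; simp [le_one']
  have hIic0 : Set.Iic (0 : I) = {0} := by
    ext s
    simp only [Set.mem_Iic, Set.mem_singleton_iff]
    exact ⟨fun h => le_antisymm h nonneg', fun h => h.le⟩
  set m : X → Y := fun x => ⨅ s ∈ Set.Iic (1 : I), H (x, s) with hm
  have hNcont := keyN hinf hbasis H hH
  have hmc : Continuous m := hNcont.comp (continuous_id.prodMk continuous_const)
  have hmm : Monotone m := fun x₁ x₂ hx => monoN H hHm hx le_rfl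
  -- the reversed homotopy
  set H' : X × I → Y := fun p => H (p.1, σ p.2) with hH'def
  have hH'c : Continuous H' :=
    hH.comp (continuous_fst.prodMk (continuous_symm.comp continuous_snd))
  have hH'm : ∀ t : I, Monotone fun x : X => H' (x, t) := fun t => hHm (σ t)
  have hN'cont := keyN hinf hbasis H' hH'c
  -- the two future homotopies
  set h₁ : X × I → Y := fun p => ⨅ s ∈ Set.Iic (σ p.2), H (p.1, s) with hh₁
  set h₂ : X × I → Y := fun p => ⨅ s ∈ Set.Iic (σ p.2), H' (p.1, s) with hh₂
  have hh₁c : Continuous h₁ :=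
    hNcont.comp (continuous_fst.prodMk (continuous_symm.comp continuous_snd))
  have hh₂c : Continuous h₂ :=
    hN'cont.comp (continuous_fst.prodMk (continuous_symm.comp continuous_snd))
  have hh₁m : Monotone h₁ := by
    rintro ⟨x₁, t₁⟩ ⟨x₂, t₂⟩ ⟨hx, ht⟩
    exact monoN H hHm hx (symm_le_symm.mpr ht)
  have hh₂m : Monotone h₂ := by
    rintro ⟨x₁, t₁⟩ ⟨x₂, t₂⟩ ⟨hx, ht⟩
    exact monoN H' hH'm hx (symm_le_symm.mpr ht)
  have hσsurj : Function.Surjective σ := fun s => ⟨σ s, symm_symm s⟩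
  refine ⟨m, hmc, hmm, ⟨h₁, hh₁c, hh₁m, ?_, ?_⟩, ⟨h₂, hh₂c, hh₂m, ?_, ?_⟩⟩
  · intro x
    show (⨅ s ∈ Set.Iic (σ (0 : I)), H (x, s)) = m x
    rw [symm_zero]
  · intro x
    show (⨅ s ∈ Set.Iic (σ (1 : I)), H (x, s)) = g₁ x
    rw [symm_one, hIic0, ← hH0 x]
    simp
  · intro x
    show (⨅ s ∈ Set.Iic (σ (0 : I)), H' (x, s)) = m x
    rw [symm_zero]
    show (⨅ s ∈ Set.Iic (1 : I), H (x, σ s)) = ⨅ s ∈ Set.Iic (1 : I), H (x, s)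
    rw [hIic1, iInf_univ, iInf_univ]
    exact hσsurj.iInf_comp fun s => H (x, s)
  · intro x
    show (⨅ s ∈ Set.Iic (σ (1 : I)), H' (x, s)) = g₂ x
    rw [symm_one, hIic0, ← hH1 x]
    simp [hH'def, symm_zero]
end

section
/- Let L be an inf-semilattice equipped with a topology for which the binary infimum ⊓ : L × L → L is jointly continuous, and suppose the underlying topological space of L is path-connected. Then all homotopy groups of L are trivial: for every basepoint x ∈ L and every n ≥ 1, the homotopy group πₙ(L, x) is trivial. -/
open Topology Topology.Homotopy GenLoop

section Aux

variable {N L : Type*} [SemilatticeInf L] [TopologicalSpace L] {x : L}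

/-- Pointwise infimum of two generalized loops. -/
def genLoopInf (hinf : Continuous fun p : L × L => p.1 ⊓ p.2) (f g : Ω^ N L x) : Ω^ N L x :=
  ⟨⟨fun y => f.1 y ⊓ g.1 y, hinf.comp ((map_continuous f.1).prodMk (map_continuous g.1))⟩,
    fun y hy => by
      show f.1 y ⊓ g.1 y = x
      rw [f.2 y hy, g.2 y hy, inf_idem]⟩

@[simp] lemma genLoopInf_apply (hinf : Continuous fun p : L × L => p.1 ⊓ p.2)
    (f g : Ω^ N L x) (y : N → unitInterval) : genLoopInf hinf f g y = f y ⊓ g y := rfl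

lemma genLoopInf_homotopic (hinf : Continuous fun p : L × L => p.1 ⊓ p.2)
    {f f' g g' : Ω^ N L x} (hf : GenLoop.Homotopic f f') (hg : GenLoop.Homotopic g g') :
    GenLoop.Homotopic (genLoopInf hinf f g) (genLoopInf hinf f' g') := by
  obtain ⟨Hf⟩ := hf
  obtain ⟨Hg⟩ := hg
  exact ⟨{ toFun := fun p => Hf p ⊓ Hg p
           continuous_toFun := hinf.comp (Hf.continuous.prodMk Hg.continuous)
           map_zero_left := fun y => by
             show Hf (0, y) ⊓ Hg (0, y) = _
             rw [Hf.apply_zero, Hg.apply_zero]; rfl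
           map_one_left := fun y => by
             show Hf (1, y) ⊓ Hg (1, y) = _
             rw [Hf.apply_one, Hg.apply_one]; rfl
           prop' := fun t y hy => by
             simp only [ContinuousMap.coe_mk]
             rw [Hf.eq_fst t hy, Hg.eq_fst t hy]
             rfl }⟩

lemma genLoopInf_idem (hinf : Continuous fun p : L × L => p.1 ⊓ p.2) (f : Ω^ N L x) :
    genLoopInf hinf f f = f := by
  ext y; exact inf_idem _

lemma genLoopInf_const (hinf : Continuous fun p : L × L => p.1 ⊓ p.2) :
    genLoopInf hinf (GenLoop.const : Ω^ N L x) GenLoop.const = GenLoop.const := by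
  ext y; exact inf_idem _

lemma genLoopInf_comm (hinf : Continuous fun p : L × L => p.1 ⊓ p.2) (f g : Ω^ N L x) :
    genLoopInf hinf f g = genLoopInf hinf g f := by
  ext y; exact inf_comm _ _

lemma genLoopInf_assoc (hinf : Continuous fun p : L × L => p.1 ⊓ p.2) (a b c : Ω^ N L x) :
    genLoopInf hinf (genLoopInf hinf a b) c = genLoopInf hinf a (genLoopInf hinf b c) := by
  ext y; exact inf_assoc _ _ _

lemma genLoopInf_trans [DecidableEq N] (hinf : Continuous fun p : L × L => p.1 ⊓ p.2)
    (i : N) (a b c d : Ω^ N L x) :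
    genLoopInf hinf (transAt i a b) (transAt i c d)
      = transAt i (genLoopInf hinf a c) (genLoopInf hinf b d) := by
  ext y
  simp only [genLoopInf_apply, transAt, coe_copy]
  split_ifs <;> rfl

end Aux

/-- A group with a second commutative, associative, idempotent operation satisfying
interchange with the group law is trivial. -/
lemma group_trivial_of_interchange {G : Type*} [Group G] (o : G → G → G)
    (idem : ∀ a, o a a = a)
    (comm : ∀ a b, o a b = o b a)
    (assoc : ∀ a b c, o (o a b) c = o a (o b c))
    (oee : o 1 1 = 1)
    (inter : ∀ a b c d, o (a * b) (c * d) = o a c * o b d) :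
    ∀ a : G, a = 1 := by
  have key : ∀ a : G, a = o a 1 * o a 1 := by
    intro a
    calc a = o a a := (idem a).symm
      _ = o (a * 1) (1 * a) := by rw [mul_one, one_mul]
      _ = o a 1 * o 1 a := inter a 1 1 a
      _ = o a 1 * o a 1 := by rw [comm 1 a]
  have u_idem : ∀ a : G, o (o a 1) 1 = o a 1 := fun a => by rw [assoc, oee]
  intro a
  have h1 : o a 1 = o a 1 * o a 1 := by
    have h := key (o a 1); rwa [u_idem] at h
  have h2 : (1 : G) = o a 1 := mul_left_cancel (a := o a 1) (by rw [mul_one, ← h1])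
  rw [key a, ← h2, mul_one]

/-- A path-connected topological inf-semilattice has trivial homotopy groups in every
positive degree, at every basepoint. -/
theorem stmt_11 {L : Type*} [SemilatticeInf L] [TopologicalSpace L]
    [PathConnectedSpace L]
    (hinf : Continuous fun p : L × L => p.1 ⊓ p.2) :
    ∀ (x : L) (n : ℕ), 1 ≤ n → Subsingleton (HomotopyGroup (Fin n) L x) := by
  intro x n hn
  haveI : Nonempty (Fin n) := ⟨⟨0, hn⟩⟩
  let mk : (Ω^ (Fin n) L x) → HomotopyGroup (Fin n) L x :=
    Quotient.mk (GenLoop.Homotopic.setoid (Fin n) x)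
  let o : HomotopyGroup (Fin n) L x → HomotopyGroup (Fin n) L x → HomotopyGroup (Fin n) L x :=
    Quotient.map₂ (genLoopInf hinf)
      (fun f f' hf g g' hg => genLoopInf_homotopic hinf hf hg)
  have omk : ∀ f g, o (mk f) (mk g) = mk (genLoopInf hinf f g) := fun f g => rfl
  have idem : ∀ a, o a a = a := by
    rintro ⟨f⟩
    exact congrArg (Quotient.mk _) (genLoopInf_idem hinf f)
  have comm : ∀ a b, o a b = o b a := by
    rintro ⟨f⟩ ⟨g⟩
    exact congrArg (Quotient.mk _) (genLoopInf_comm hinf f g)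
  have assoc : ∀ a b c, o (o a b) c = o a (o b c) := by
    rintro ⟨f⟩ ⟨g⟩ ⟨h⟩
    exact congrArg (Quotient.mk _) (genLoopInf_assoc hinf f g h)
  have oee : o 1 1 = 1 := by
    show o (mk GenLoop.const) (mk GenLoop.const) = mk GenLoop.const
    exact congrArg (Quotient.mk _) (genLoopInf_const hinf)
  have inter : ∀ a b c d, o (a * b) (c * d) = o a c * o b d := by
    rintro ⟨f⟩ ⟨g⟩ ⟨p⟩ ⟨q⟩
    have i0 : Fin n := ⟨0, hn⟩
    show o (mk f * mk g) (mk p * mk q) = o (mk f) (mk p) * o (mk g) (mk q)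
    have h1 : mk f * mk g = mk (transAt i0 g f) := HomotopyGroup.mul_spec (i := i0)
    have h2 : mk p * mk q = mk (transAt i0 q p) := HomotopyGroup.mul_spec (i := i0)
    have h3 : mk (genLoopInf hinf f p) * mk (genLoopInf hinf g q)
        = mk (transAt i0 (genLoopInf hinf g q) (genLoopInf hinf f p)) :=
      HomotopyGroup.mul_spec (i := i0)
    rw [h1, h2, omk, omk, omk, genLoopInf_trans hinf i0 g f q p, h3]
  have htriv := group_trivial_of_interchange o idem comm assoc oee inter
  exact ⟨fun a b => by rw [htriv a, htriv b]⟩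
end

section
/- Let L be a complete lattice equipped with a compact Hausdorff topology for which both the binary infimum ⊓ : L × L → L and the binary supremum ⊔ : L × L → L are jointly continuous, and such that every point of L has a neighborhood basis of sets closed under ⊓ and a neighborhood basis of sets closed under ⊔ (i.e., L is a hypercontinuous lattice equipped with its Lawson topology). If the underlying topological space of L is homotopy equivalent to a connected CW complex, then L is future contractible: there exists a continuous H : L × [0,1] → L, monotone with respect to the product order (the lattice order on L and the standard order on [0,1]), with H(·,0) = id_L and H(·,1) the constant map at ⊤ (the maximum of L). -/
open unitInterval

universe u

universe w v

open CategoryTheory Limits Topology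

theorem lpc_empty {X : Type*} [TopologicalSpace X] [IsEmpty X] : LocallyPathConnectedSpace X :=
  ⟨fun x => (IsEmpty.false x).elim⟩

open TopologicalSpace in
theorem lpc_isColimit {J : Type v} [SmallCategory J]
    (F : J ⥤ TopCat.{u}) (c : Cocone F) (hc : IsColimit c)
    {ι : Type w} (o : ι → J)
    (hlpc : ∀ i, LocallyPathConnectedSpace (F.obj (o i)))
    (hmap : ∀ j : J, ∃ i, Nonempty (j ⟶ o i)) :
    LocallyPathConnectedSpace c.pt := by
  let g : (Σ i, (F.obj (o i) : Type u)) → c.pt := fun p => c.ι.app (o p.1) p.2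
  have htop : (c.pt.str : TopologicalSpace c.pt) =
      ⨆ j, ((F.obj j).str).coinduced (c.ι.app j) := TopCat.coinduced_of_isColimit c hc
  have hgi : ∀ i : ι, ⇑(c.ι.app (o i)) =
      g ∘ (@Sigma.mk ι (fun i => (F.obj (o i) : Type u)) i) := fun i => rfl
  have hg : (c.pt.str : TopologicalSpace c.pt) =
      (instTopologicalSpaceSigma).coinduced g := by
    rw [htop]
    refine le_antisymm (iSup_le fun j => ?_) ?_
    · obtain ⟨i, ⟨f⟩⟩ := hmap j
      have hfa : ⇑(c.ι.app j) = ⇑(c.ι.app (o i)) ∘ ⇑(F.map f) := by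
        rw [← c.w f]; rfl
      rw [hfa, ← coinduced_compose]
      calc (((F.obj j).str).coinduced (F.map f)).coinduced (c.ι.app (o i))
          ≤ ((F.obj (o i)).str).coinduced (c.ι.app (o i)) :=
            coinduced_mono (continuous_iff_coinduced_le.1 (F.map f).hom.continuous)
        _ = (((F.obj (o i)).str).coinduced (@Sigma.mk ι (fun i => (F.obj (o i) : Type u)) i)).coinduced g := by
            rw [coinduced_compose, ← hgi i]
        _ ≤ (instTopologicalSpaceSigma : TopologicalSpace (Σ i, (F.obj (o i) : Type u))).coinduced g := by
            apply coinduced_mono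
            exact le_iSup (fun i => ((F.obj (o i)).str).coinduced (Sigma.mk i)) i
    · show (instTopologicalSpaceSigma : TopologicalSpace (Σ i, (F.obj (o i) : Type u))).coinduced g ≤ _
      rw [show (instTopologicalSpaceSigma : TopologicalSpace (Σ i, (F.obj (o i) : Type u))) = ⨆ i, ((F.obj (o i)).str).coinduced (@Sigma.mk ι (fun i => (F.obj (o i) : Type u)) i) from rfl, coinduced_iSup]
      refine iSup_le fun i => ?_
      rw [coinduced_compose, ← hgi i]
      exact le_iSup_of_le (o i) le_rfl
  haveI : ∀ i, LocallyPathConnectedSpace (F.obj (o i)) := hlpc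
  have hS : @LocallyPathConnectedSpace c.pt ((instTopologicalSpaceSigma).coinduced g) :=
    LocPathConnectedSpace.coinduced g
  haveI hpt : LocallyPathConnectedSpace c.pt := by rwa [← hg] at hS
  exact hpt

open TopologicalSpace in
theorem lpc_colimit {J : Type v} [SmallCategory J]
    (F : J ⥤ TopCat.{max v u}) [HasColimit F]
    {ι : Type w} (o : ι → J)
    (hlpc : ∀ i, LocallyPathConnectedSpace (F.obj (o i)))
    (hmap : ∀ j : J, ∃ i, Nonempty (j ⟶ o i)) :
    LocallyPathConnectedSpace (colimit F : TopCat.{max v u}) := by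
  exact lpc_isColimit F (colimit.cocone F) (colimit.isColimit F) o hlpc hmap

theorem lpc_convex {E : Type*} [NormedAddCommGroup E] [NormedSpace ℝ E] {s : Set E}
    (hs : Convex ℝ s) : LocallyPathConnectedSpace s := by
  refine LocPathConnectedSpace.of_bases (p := fun (_ : s) (ε : ℝ) => 0 < ε)
    (s := fun (x : s) ε => Subtype.val ⁻¹' Metric.ball x.1 ε) (fun x => ?_) (fun x ε hε => ?_)
  · rw [nhds_subtype]
    exact Metric.nhds_basis_ball.comap _
  · have hxb : (x : E) ∈ Metric.ball x.1 ε := Metric.mem_ball_self hε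
    refine ⟨x, hxb, ?_⟩
    intro y hy
    have hmem : ∀ t : unitInterval, ((1 : ℝ) - t) • (x : E) + (t : ℝ) • (y : E) ∈
        s ∩ Metric.ball x.1 ε := by
      intro t
      constructor
      · exact hs x.2 y.2 (by simpa using t.2.2) t.2.1 (by ring)
      · exact (convex_ball x.1 ε) hxb hy (by simpa using t.2.2) t.2.1 (by ring)
    refine ⟨⟨⟨fun t => ⟨_, (hmem t).1⟩, ?_⟩, ?_, ?_⟩, fun t => (hmem t).2⟩
    · exact (((continuous_const.sub continuous_subtype_val).smul continuous_const).add
        (continuous_subtype_val.smul continuous_const)).subtype_mk _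
    · ext; simp
    · ext; simp

theorem lpc_ulift {X : Type u} [TopologicalSpace X] [LocallyPathConnectedSpace X] :
    LocallyPathConnectedSpace (ULift.{v} X) :=
  (Homeomorph.ulift.symm : X ≃ₜ ULift X).isQuotientMap.locPathConnectedSpace

open TopCat in
theorem lpc_disk (n : ℕ) : LocallyPathConnectedSpace (𝔻 n : TopCat.{u}) := by
  haveI : LocallyPathConnectedSpace
      (Metric.closedBall (0 : EuclideanSpace ℝ (Fin n)) 1) :=
    lpc_convex (convex_closedBall _ _)
  exact lpc_ulift

theorem lpc_attach {X₁ X₂ : TopCat.{u}} {f : X₁ ⟶ X₂} (n : ℕ)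
    (att : HomotopicalAlgebra.AttachCells (TopCat.RelativeCWComplex.basicCell n) f)
    (hX : LocallyPathConnectedSpace X₁) : LocallyPathConnectedSpace X₂ := by
  haveI : LocallyPathConnectedSpace att.cofan₂.pt :=
    lpc_isColimit _ _ att.isColimit₂ (Discrete.mk : att.ι → Discrete att.ι)
      (fun i => by exact lpc_disk n) (fun j => ⟨j.as, ⟨eqToHom (by cases j; rfl)⟩⟩)
  refine lpc_isColimit (span att.g₁ att.m) _ att.isPushout.isColimit
    (fun b : Bool => cond b WalkingSpan.left WalkingSpan.right) ?_ ?_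
  · intro i
    cases i
    · exact ‹LocallyPathConnectedSpace att.cofan₂.pt›
    · exact hX
  · intro j
    cases j with
    | none => exact ⟨true, ⟨WalkingSpan.Hom.fst⟩⟩
    | some j' => cases j' with
      | left => exact ⟨true, ⟨𝟙 _⟩⟩
      | right => exact ⟨false, ⟨𝟙 _⟩⟩

theorem lpc_sk {C : TopCat.{u}} (hC : TopCat.CWComplex C) :
    ∀ n, LocallyPathConnectedSpace (hC.F.obj n)
  | 0 => by
    haveI : IsEmpty (hC.F.obj 0) :=
      ⟨fun x => PEmpty.elim ((hC.isoBot.hom ≫ initial.to (TopCat.of PEmpty.{u+1})) x)⟩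
    exact lpc_empty
  | (n+1) => lpc_attach n (hC.attachCells n (not_isMax n)) (lpc_sk hC n)

theorem lpc_toTopCat {C : TopCat.{u}} (hC : TopCat.CWComplex C) : LocallyPathConnectedSpace C :=
  lpc_isColimit hC.F _ hC.isColimit (id : ℕ → ℕ) (fun n => lpc_sk hC n) (fun j => ⟨j, ⟨𝟙 j⟩⟩)

set_option linter.unusedSectionVars false
section LatticePart

open Set Filter Topology

variable {L : Type u} [CompleteLattice L] [TopologicalSpace L] [CompactSpace L] [T2Space L]

theorem closed_le (hsup : Continuous fun p : L × L => p.1 ⊔ p.2) :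
    IsClosed {p : L × L | p.1 ≤ p.2} := by
  have h : {p : L × L | p.1 ≤ p.2} = {p : L × L | p.1 ⊔ p.2 = p.2} := by
    ext p; exact (sup_eq_right.symm : p.1 ≤ p.2 ↔ _)
  rw [h]
  exact isClosed_eq hsup continuous_snd

theorem closed_le1 (hsup : Continuous fun p : L × L => p.1 ⊔ p.2) (b : L) :
    IsClosed {x : L | x ≤ b} :=
  (closed_le hsup).preimage (continuous_id.prodMk continuous_const)

theorem closed_ge1 (hsup : Continuous fun p : L × L => p.1 ⊔ p.2) (b : L) :
    IsClosed {x : L | b ≤ x} :=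
  (closed_le hsup).preimage (continuous_const.prodMk continuous_id)

theorem mySSup_mem_closure (hsup : Continuous fun p : L × L => p.1 ⊔ p.2)
    {D : Set L} (hne : D.Nonempty) (hdir : DirectedOn (· ≤ ·) D) :
    sSup D ∈ closure D := by
  obtain ⟨d₀, hd₀⟩ := hne
  haveI : Nonempty D := ⟨⟨d₀, hd₀⟩⟩
  set Z : D → Set L := fun d => closure D ∩ {x | d.1 ≤ x} with hZ
  have hZd : Directed (· ⊇ ·) Z := by
    intro a b
    obtain ⟨e, he, hae, hbe⟩ := hdir a.1 a.2 b.1 b.2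
    exact ⟨⟨e, he⟩, fun x hx => ⟨hx.1, le_trans hae hx.2⟩,
      fun x hx => ⟨hx.1, le_trans hbe hx.2⟩⟩
  obtain ⟨y, hy⟩ := IsCompact.nonempty_iInter_of_directed_nonempty_isCompact_isClosed Z hZd
    (fun d => ⟨d.1, subset_closure d.2, le_refl d.1⟩)
    (fun d => (isClosed_closure.inter (closed_ge1 hsup _)).isCompact)
    (fun d => isClosed_closure.inter (closed_ge1 hsup _))
  have hy' : ∀ d : D, y ∈ Z d := by
    intro d; exact Set.mem_iInter.1 hy d
  have h1 : sSup D ≤ y := sSup_le fun d hd => (hy' ⟨d, hd⟩).2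
  have h2 : y ≤ sSup D := by
    have hs : closure D ⊆ {x : L | x ≤ sSup D} :=
      closure_minimal (fun x hx => le_sSup hx) (closed_le1 hsup _)
    exact hs (hy' ⟨d₀, hd₀⟩).1
  have : (sSup D) = y := le_antisymm h1 h2
  rw [this]
  exact (hy' ⟨d₀, hd₀⟩).1

theorem mySInf_mem_closure (hsup : Continuous fun p : L × L => p.1 ⊔ p.2)
    {D : Set L} (hne : D.Nonempty) (hdir : DirectedOn (· ≥ ·) D) :
    sInf D ∈ closure D := by
  obtain ⟨d₀, hd₀⟩ := hne
  haveI : Nonempty D := ⟨⟨d₀, hd₀⟩⟩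
  set Z : D → Set L := fun d => closure D ∩ {x | x ≤ d.1} with hZ
  have hZd : Directed (· ⊇ ·) Z := by
    intro a b
    obtain ⟨e, he, hae, hbe⟩ := hdir a.1 a.2 b.1 b.2
    exact ⟨⟨e, he⟩, fun x hx => ⟨hx.1, le_trans hx.2 hae⟩,
      fun x hx => ⟨hx.1, le_trans hx.2 hbe⟩⟩
  obtain ⟨y, hy⟩ := IsCompact.nonempty_iInter_of_directed_nonempty_isCompact_isClosed Z hZd
    (fun d => ⟨d.1, subset_closure d.2, le_refl d.1⟩)
    (fun d => (isClosed_closure.inter (closed_le1 hsup _)).isCompact)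
    (fun d => isClosed_closure.inter (closed_le1 hsup _))
  have hy' : ∀ d : D, y ∈ Z d := by
    intro d; exact Set.mem_iInter.1 hy d
  have h1 : y ≤ sInf D := le_sInf fun d hd => (hy' ⟨d, hd⟩).2
  have h2 : sInf D ≤ y := by
    have hs : closure D ⊆ {x : L | sInf D ≤ x} :=
      closure_minimal (fun x hx => sInf_le hx) (closed_ge1 hsup _)
    exact hs (hy' ⟨d₀, hd₀⟩).1
  have : (sInf D) = y := le_antisymm h2 h1
  rw [this]
  exact (hy' ⟨d₀, hd₀⟩).1

theorem le_of_closure_nhds (hsup : Continuous fun p : L × L => p.1 ⊔ p.2)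
    {z x : L} (h : ∀ V ∈ 𝓝 x, ∃ w ∈ closure V, z ≤ w) : z ≤ x := by
  haveI : Nonempty (𝓝 x).sets := ⟨⟨Set.univ, univ_mem⟩⟩
  set Z : (𝓝 x).sets → Set L := fun V => closure V.1 ∩ {w | z ≤ w} with hZ
  have hZd : Directed (· ⊇ ·) Z := by
    intro a b
    refine ⟨⟨a.1 ∩ b.1, inter_mem a.2 b.2⟩, ?_, ?_⟩
    · exact fun x hx => ⟨closure_mono Set.inter_subset_left hx.1, hx.2⟩
    · exact fun x hx => ⟨closure_mono Set.inter_subset_right hx.1, hx.2⟩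
  obtain ⟨y, hy⟩ := IsCompact.nonempty_iInter_of_directed_nonempty_isCompact_isClosed Z hZd
    (fun V => by obtain ⟨w, hw, hzw⟩ := h V.1 V.2; exact ⟨w, hw, hzw⟩)
    (fun V => (isClosed_closure.inter (closed_ge1 hsup _)).isCompact)
    (fun V => isClosed_closure.inter (closed_ge1 hsup _))
  have hy' : ∀ V : (𝓝 x).sets, y ∈ Z V := fun V => Set.mem_iInter.1 hy V
  have hzy : z ≤ y := (hy' ⟨Set.univ, univ_mem⟩).2
  have hyx : y = x := by
    by_contra hne
    have hU : {y}ᶜ ∈ 𝓝 x := by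
      refine IsOpen.mem_nhds isOpen_compl_singleton ?_
      simp only [Set.mem_compl_iff, Set.mem_singleton_iff]
      exact fun hc => hne hc.symm
    obtain ⟨V, hV, hVc, hVU⟩ := exists_mem_nhds_isClosed_subset hU
    have : y ∈ closure V := (hy' ⟨V, hV⟩).1
    rw [hVc.closure_eq] at this
    exact (hVU this) rfl
  exact hyx ▸ hzy

theorem mapClusterPt_mem_closure {α : Type*} {F : Filter α} {u : α → L} {y : L}
    (hy : MapClusterPt y F u) {S : Set α} (hS : S ∈ F) : y ∈ closure (u '' S) := by
  rw [mem_closure_iff_clusterPt]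
  refine ClusterPt.mono hy ?_
  rw [Filter.le_principal_iff, Filter.mem_map]
  exact Filter.mem_of_superset hS (Set.subset_preimage_image u S)

theorem sSup_supClosure' {S : Set L} : sSup (supClosure S) = sSup S := by
  refine le_antisymm (sSup_le fun a ha => ?_) (sSup_le_sSup subset_supClosure)
  have : sSup S ∈ upperBounds (supClosure S) := by
    rw [upperBounds_supClosure]
    exact fun b hb => le_sSup hb
  exact this ha

end LatticePart

set_option maxHeartbeats 1000000 in
open Set Filter Topology unitInterval in
theorem exists_H {L : Type u} [CompleteLattice L] [TopologicalSpace L]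
    [CompactSpace L] [T2Space L]
    (hsup : Continuous fun p : L × L => p.1 ⊔ p.2)
    (hsupBasis : ∀ x : L, (nhds x).HasBasis
      (fun s : Set L => s ∈ nhds x ∧ ∀ a ∈ s, ∀ b ∈ s, a ⊔ b ∈ s) id)
    (hj : Joined (⊥ : L) ⊤) :
    ∃ H : L × I → L, Continuous H ∧ Monotone H ∧
      (∀ x : L, H (x, 0) = x) ∧ (∀ x : L, H (x, 1) = ⊤) := by
  obtain ⟨p⟩ := hj
  set P : ℝ → L := fun t => p (Set.projIcc 0 1 zero_le_one t) with hP
  have hPc : Continuous P := p.continuous.comp (continuous_projIcc)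
  set c : ℝ → L := fun t => sSup (P '' Set.Iic t) with hc
  have hmono : Monotone c := fun a b hab =>
    sSup_le_sSup (Set.image_mono (Set.Iic_subset_Iic.2 hab))
  have hPle : ∀ u t : ℝ, u ≤ t → P u ≤ c t := fun u t h => le_sSup ⟨u, h, rfl⟩
  have hcont : Continuous c := by
    rw [continuous_iff_continuousAt]
    intro t₀
    have hleft : Tendsto c (𝓝[<] t₀) (𝓝 (c t₀)) := by
      apply tendsto_nhds_of_unique_mapClusterPt
      intro y hy
      have h2 : ∀ s, s < t₀ → c s ≤ y := by
        intro s hs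
        have hm : Set.Ioo s t₀ ∈ 𝓝[<] t₀ := Ioo_mem_nhdsLT_of_mem ⟨hs, le_refl _⟩
        have hcl := mapClusterPt_mem_closure hy hm
        refine (closure_minimal ?_ (closed_ge1 hsup (c s))) hcl
        rintro x ⟨u, hu, rfl⟩
        exact hmono (le_of_lt hu.1)
      have hy_le : y ≤ c t₀ := by
        have hcl := mapClusterPt_mem_closure hy (self_mem_nhdsWithin)
        refine (closure_minimal ?_ (closed_le1 hsup (c t₀))) hcl
        rintro x ⟨u, hu, rfl⟩
        exact hmono (le_of_lt hu)
      have h3 : c t₀ ≤ y := by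
        apply sSup_le
        rintro x ⟨u, hu, rfl⟩
        rcases lt_or_eq_of_le (show u ≤ t₀ from hu) with h | h
        · obtain ⟨s, hs1, hs2⟩ := exists_between h
          exact le_trans (hPle u s hs1.le) (h2 s hs2)
        · subst h
          have hsub : Set.Iio u ⊆ {w : ℝ | P w ≤ y} := by
            intro w hw
            obtain ⟨s, hs1, hs2⟩ := exists_between (show w < u from hw)
            exact le_trans (hPle w s hs1.le) (h2 s hs2)
          have hmem : u ∈ closure (Set.Iio u) := by
            rw [closure_Iio]; exact self_mem_Iic
          have hclosed : IsClosed {w : ℝ | P w ≤ y} :=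
            (closed_le1 hsup y).preimage hPc
          exact closure_minimal hsub hclosed hmem
      exact le_antisymm hy_le h3
    have hright : Tendsto c (𝓝[>] t₀) (𝓝 (c t₀)) := by
      apply tendsto_nhds_of_unique_mapClusterPt
      intro y hy
      have hge : c t₀ ≤ y := by
        have hcl := mapClusterPt_mem_closure hy (self_mem_nhdsWithin)
        refine (closure_minimal ?_ (closed_ge1 hsup (c t₀))) hcl
        rintro x ⟨u, hu, rfl⟩
        exact hmono (le_of_lt hu)
      have hle_s : ∀ s, t₀ < s → y ≤ c s := by
        intro s hs
        have hm : Set.Ioo t₀ s ∈ 𝓝[>] t₀ := Ioo_mem_nhdsGT_of_mem ⟨le_refl _, hs⟩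
        have hcl := mapClusterPt_mem_closure hy hm
        refine (closure_minimal ?_ (closed_le1 hsup (c s))) hcl
        rintro x ⟨u, hu, rfl⟩
        exact hmono (le_of_lt hu.2)
      set d : ℝ → L := fun s => sSup (P '' Set.Icc t₀ s) with hd
      have hdmono : ∀ s s' : ℝ, s ≤ s' → d s ≤ d s' := fun s s' h =>
        sSup_le_sSup (Set.image_mono (Set.Icc_subset_Icc_right h))
      set m' := sInf (d '' Set.Ioi t₀) with hm'
      have hm'P : m' ≤ P t₀ := by
        apply le_of_closure_nhds hsup
        intro V hV
        obtain ⟨V', ⟨hV'mem, hV'sup⟩, hV'sub⟩ := (hsupBasis (P t₀)).mem_iff.1 hV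
        have hpre : P ⁻¹' V' ∈ 𝓝 t₀ := hPc.continuousAt.preimage_mem_nhds hV'mem
        obtain ⟨ε, hε, hball⟩ := Metric.mem_nhds_iff.1 hpre
        have hs : t₀ < t₀ + ε / 2 := by linarith
        have hsub : Set.Icc t₀ (t₀ + ε / 2) ⊆ P ⁻¹' V' := by
          intro w hw
          apply hball
          rw [Metric.mem_ball, Real.dist_eq, abs_lt]
          constructor <;> [linarith [hw.1]; linarith [hw.2]]
        have himg : P '' Set.Icc t₀ (t₀ + ε / 2) ⊆ V' := Set.image_subset_iff.2 hsub
        have hne : (P '' Set.Icc t₀ (t₀ + ε / 2)).Nonempty :=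
          ⟨P t₀, t₀, ⟨le_refl _, hs.le⟩, rfl⟩
        have hVsup' : SupClosed V' := fun a ha b hb => hV'sup a ha b hb
        have h1 : d (t₀ + ε / 2) = sSup (supClosure (P '' Set.Icc t₀ (t₀ + ε / 2))) :=
          (sSup_supClosure').symm
        have h2 : d (t₀ + ε / 2) ∈ closure (supClosure (P '' Set.Icc t₀ (t₀ + ε / 2))) := by
          rw [h1]
          exact mySSup_mem_closure hsup (hne.mono subset_supClosure)
            supClosed_supClosure.directedOn
        have h3 : supClosure (P '' Set.Icc t₀ (t₀ + ε / 2)) ⊆ V' :=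
          supClosure_min himg hVsup'
        refine ⟨d (t₀ + ε / 2), closure_mono (h3.trans hV'sub) h2, ?_⟩
        exact sInf_le ⟨t₀ + ε / 2, hs, rfl⟩
      set m := sInf (c '' Set.Ioi t₀) with hm
      have hyle : y ≤ m := by
        apply le_sInf
        rintro x ⟨s, hs, rfl⟩
        exact hle_s s hs
      have hmc : m ≤ c t₀ := by
        have hD'ne : (d '' Set.Ioi t₀).Nonempty := ⟨d (t₀ + 1), Set.mem_image_of_mem d (Set.mem_Ioi.2 (lt_add_one t₀))⟩
        have hdir : DirectedOn (· ≥ ·) (d '' Set.Ioi t₀) := by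
          rintro _ ⟨s1, hs1, rfl⟩ _ ⟨s2, hs2, rfl⟩
          rcases le_total s1 s2 with h | h
          · exact ⟨d s1, ⟨s1, hs1, rfl⟩, le_refl _, hdmono _ _ h⟩
          · exact ⟨d s2, ⟨s2, hs2, rfl⟩, hdmono _ _ h, le_refl _⟩
        have hm'cl : m' ∈ closure (d '' Set.Ioi t₀) := mySInf_mem_closure hsup hD'ne hdir
        have hk : Continuous fun x : L => c t₀ ⊔ x :=
          hsup.comp (continuous_const.prodMk continuous_id)
        have himg : (fun x : L => c t₀ ⊔ x) '' (d '' Set.Ioi t₀) = c '' Set.Ioi t₀ := by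
          rw [← Set.image_comp]
          apply Set.image_congr
          intro s hs
          show c t₀ ⊔ d s = c s
          rw [hc, hd]
          simp only []
          rw [← sSup_union, ← Set.image_union, Set.Iic_union_Icc_eq_Iic (le_of_lt hs)]
        have h5 : c t₀ ⊔ m' ∈ closure (c '' Set.Ioi t₀) := by
          rw [← himg]
          exact (image_closure_subset_closure_image hk) ⟨m', hm'cl, rfl⟩
        have h6 : closure (c '' Set.Ioi t₀) ⊆ {x : L | m ≤ x} := by
          refine closure_minimal ?_ (closed_ge1 hsup m)
          rintro x ⟨s, hs, rfl⟩
          exact sInf_le ⟨s, hs, rfl⟩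
        calc m ≤ c t₀ ⊔ m' := h6 h5
          _ ≤ c t₀ ⊔ P t₀ := sup_le_sup_left hm'P _
          _ = c t₀ := sup_eq_left.2 (hPle t₀ t₀ (le_refl _))
      exact le_antisymm (hyle.trans hmc) hge
    have hdecomp : 𝓝 t₀ = 𝓝[<] t₀ ⊔ (pure t₀ ⊔ 𝓝[>] t₀) := by
      rw [← nhdsLT_sup_nhdsGE t₀]
      congr 1
      rw [show Set.Ici t₀ = {t₀} ∪ Set.Ioi t₀ by
        rw [Set.singleton_union, Set.Ioi_insert], nhdsWithin_union, nhdsWithin_singleton]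
    have : Tendsto c (𝓝 t₀) (𝓝 (c t₀)) := by
      rw [hdecomp, tendsto_sup, tendsto_sup]
      exact ⟨hleft, tendsto_pure_nhds c t₀, hright⟩
    exact this
  have hc0 : c 0 = ⊥ := by
    have himg : P '' Set.Iic (0 : ℝ) = {⊥} := by
      apply Set.eq_singleton_iff_nonempty_unique_mem.2
      refine ⟨⟨⊥, ⟨0, Set.mem_Iic.2 (le_refl 0), ?_⟩⟩, ?_⟩
      · rw [hP]; simp only []
        rw [Set.projIcc_of_le_left _ (le_refl 0)]
        exact p.source
      · rintro x ⟨u, hu, rfl⟩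
        rw [hP]; simp only []
        rw [Set.projIcc_of_le_left _ hu]
        exact p.source
    rw [hc]; simp only []
    rw [himg, sSup_singleton]
  have hc1 : c 1 = ⊤ := by
    apply top_unique
    have : P 1 = ⊤ := by
      rw [hP]; simp only []
      rw [Set.projIcc_right]
      exact p.target
    rw [← this]
    exact hPle 1 1 (le_refl _)
  refine ⟨fun q => q.1 ⊔ c q.2, ?_, ?_, ?_, ?_⟩
  · exact hsup.comp (continuous_fst.prodMk
      (hcont.comp (continuous_subtype_val.comp continuous_snd)))
  · intro q q' hq
    exact sup_le_sup hq.1 (hmono hq.2)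
  · intro x
    show x ⊔ c ((0 : I) : ℝ) = x
    rw [Icc.coe_zero, hc0, sup_bot_eq]
  · intro x
    show x ⊔ c ((1 : I) : ℝ) = ⊤
    rw [Icc.coe_one, hc1, sup_top_eq]

/-- A hypercontinuous lattice equipped with its Lawson topology (a complete lattice with
a compact Hausdorff topology for which binary inf and binary sup are jointly continuous
and every point admits neighborhood bases of sub-semilattices for each operation) is
future contractible if its underlying space is homotopy equivalent to a connected
CW complex. -/
theorem stmt_12 {L : Type u} [CompleteLattice L] [TopologicalSpace L]
    [CompactSpace L] [T2Space L]
    (hinf : Continuous fun p : L × L => p.1 ⊓ p.2)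
    (hsup : Continuous fun p : L × L => p.1 ⊔ p.2)
    (hinfBasis : ∀ x : L, (nhds x).HasBasis
      (fun s : Set L => s ∈ nhds x ∧ ∀ a ∈ s, ∀ b ∈ s, a ⊓ b ∈ s) id)
    (hsupBasis : ∀ x : L, (nhds x).HasBasis
      (fun s : Set L => s ∈ nhds x ∧ ∀ a ∈ s, ∀ b ∈ s, a ⊔ b ∈ s) id)
    (hcw : ∃ (C : TopCat.{u}) (_ : TopCat.CWComplex C), ConnectedSpace C ∧
      Nonempty (ContinuousMap.HomotopyEquiv L C)) :
    ∃ H : L × I → L, Continuous H ∧ Monotone H ∧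
      (∀ x : L, H (x, 0) = x) ∧ (∀ x : L, H (x, 1) = ⊤) := by
  obtain ⟨C, hC, hConn, ⟨e⟩⟩ := hcw
  haveI := lpc_toTopCat hC
  haveI := hConn
  haveI : PathConnectedSpace C := pathConnectedSpace_iff_connectedSpace.2 hConn
  obtain ⟨K⟩ := e.left_inv
  have jr : ∀ x : L, Joined (e.invFun (e.toFun x)) x := by
    intro x
    refine ⟨⟨⟨fun t => K (t, x), ?_⟩, ?_, ?_⟩⟩
    · exact K.continuous.comp (continuous_id.prodMk continuous_const)
    · exact K.apply_zero x
    · exact K.apply_one x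
  have jC : Joined (e.toFun (⊥ : L)) (e.toFun (⊤ : L)) := PathConnectedSpace.joined _ _
  have jL : Joined (e.invFun (e.toFun (⊥ : L))) (e.invFun (e.toFun (⊤ : L))) :=
    ⟨jC.somePath.map e.invFun.continuous⟩
  have hj : Joined (⊥ : L) ⊤ := ((jr ⊥).symm.trans jL).trans (jr ⊤)
  exact exists_H hsup hsupBasis hj
end
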